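/- arXiv:1407.2380 — 2 statements merged into one kernel-verified Lean document; each statement's English description precedes it below -/
import Mathlib

section
/- Let b_1,…,b_d ≥ 2 be pairwise coprime integers. Then there exists a constant C > 0 (depending on b_1,…,b_d) such that the discrepancy D_N of the Halton sequence in bases b_1,…,b_d satisfies D_N ≤ C · (log N)^d / N for all N ≥ 2; that is, every Halton sequence is a low-discrepancy sequence. -/
open Real Finset

/-- The discrepancy of the first `N` points of a sequence `z` in `[0,1)^ι`. -/
noncomputable def disc {ι : Type*} [Fintype ι] (z : ℕ → ι → ℝ) (N : ℕ) : ℝ :=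
  sSup { r : ℝ | ∃ u v : ι → ℝ,
    (∀ i, 0 ≤ u i ∧ u i ≤ v i ∧ v i ≤ 1) ∧
    r = |(Nat.card {n : ℕ // n < N ∧ ∀ i, u i ≤ z n i ∧ z n i < v i} : ℝ) / N
          - ∏ i, (v i - u i)| }

/-- The radical inverse function in base `b`. -/
noncomputable def radInv (b n : ℕ) : ℝ :=
  ∑ i ∈ Finset.range (Nat.digits b n).length,
    (((Nat.digits b n).getD i 0 : ℕ) : ℝ) / (b : ℝ) ^ (i + 1)

lemma radInv_zero (b : ℕ) : radInv b 0 = 0 := by simp [radInv]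

lemma radInv_rec {b : ℕ} (hb : 2 ≤ b) (n : ℕ) :
    radInv b n = ((n % b : ℕ) + radInv b (n / b)) / b := by
  rcases eq_or_ne n 0 with rfl | hn
  · simp [radInv_zero, Nat.zero_mod]
  · have h1 : (1 : ℕ) < b := hb
    have hd : Nat.digits b n = n % b :: Nat.digits b (n / b) :=
      Nat.digits_def' h1 (Nat.pos_of_ne_zero hn)
    rw [radInv, hd]
    simp only [List.length_cons]
    rw [Finset.sum_range_succ']
    simp only [List.getD_cons_succ, List.getD_cons_zero]
    rw [radInv, add_div, add_comm]
    congr 1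
    · norm_num
    · rw [Finset.sum_div]
      refine Finset.sum_congr rfl fun i _ => ?_
      rw [div_div]
      ring_nf

lemma radInv_nonneg (b n : ℕ) : 0 ≤ radInv b n := by
  apply Finset.sum_nonneg
  intro i _
  positivity

lemma radInv_lt_one {b : ℕ} (hb : 2 ≤ b) : ∀ n, radInv b n < 1 := by
  intro n
  induction n using Nat.strong_induction_on with
  | _ n ih =>
    rcases eq_or_ne n 0 with rfl | hn
    · simp [radInv_zero]
    · have hbpos : (0 : ℝ) < b := by positivity
      rw [radInv_rec hb n]
      rw [div_lt_one hbpos]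
      have h1 : radInv b (n / b) < 1 := ih _ (Nat.div_lt_self (Nat.pos_of_ne_zero hn) hb)
      have h2 : (n % b : ℕ) < b := Nat.mod_lt _ (by omega)
      have h2' : ((n % b : ℕ) : ℝ) ≤ (b : ℝ) - 1 := by
        have : ((n % b : ℕ) : ℝ) + 1 ≤ (b : ℝ) := by exact_mod_cast h2
        linarith
      linarith

/-- Decomposition of `[0, a/b^L)` into elementary intervals, encoded as pairs `(k, c)`
meaning the set of `n` with `n % b^k = c`. -/
def dec (b : ℕ) : ℕ → ℕ → Finset (ℕ × ℕ)
  | 0, a => if a = 0 then ∅ else {(0, 0)}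
  | (L+1), a => ((Finset.range (a / b ^ L)).image fun t => (1, t)) ∪
      ((dec b L (a % b ^ L)).image fun kc => (kc.1 + 1, a / b ^ L + kc.2 * b))

lemma dec_zero (b : ℕ) : ∀ L, dec b L 0 = ∅ := by
  intro L
  induction L with
  | zero => simp [dec]
  | succ L ih => simp [dec, ih]

lemma dec_mem {b : ℕ} (hb : 2 ≤ b) :
    ∀ L a, a ≤ b ^ L → ∀ kc ∈ dec b L a, kc.2 < b ^ kc.1 := by
  intro L
  induction L with
  | zero =>
    intro a ha kc hkc
    have ha1 : a ≤ 1 := by simpa using ha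
    interval_cases a
    · simp [dec] at hkc
    · simp [dec] at hkc
      simp [hkc]
  | succ L ih =>
    intro a ha kc hkc
    have hbL : 0 < b ^ L := pow_pos (by omega) _
    simp only [dec, Finset.mem_union, Finset.mem_image, Finset.mem_range] at hkc
    rcases hkc with ⟨t, ht, rfl⟩ | ⟨kc', hkc', rfl⟩
    · have hps : b ^ (L+1) = b ^ L * b := pow_succ b L
      have : a / b ^ L ≤ b := by
        rw [Nat.div_le_iff_le_mul_add_pred hbL]
        omega
      simpa using lt_of_lt_of_le ht this
    · have h1 : kc'.2 < b ^ kc'.1 := ih _ (le_of_lt (Nat.mod_lt _ hbL)) _ hkc'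
      have hq : a / b ^ L < b ∨ a % b ^ L = 0 := by
        rcases Nat.lt_or_ge a (b ^ (L+1)) with h | h
        · left
          rw [Nat.div_lt_iff_lt_mul hbL]
          rw [pow_succ] at h
          have hc : b ^ L * b = b * b ^ L := Nat.mul_comm _ _
          omega
        · right
          have : a = b ^ (L+1) := le_antisymm ha h
          simp [this, pow_succ, Nat.mul_mod_left]
      rcases hq with hq | hq
      · simp only [pow_succ]
        have h3 : kc'.2 * b + b ≤ b ^ kc'.1 * b := by
          have h4 : kc'.2 + 1 ≤ b ^ kc'.1 := h1
          calc kc'.2 * b + b = (kc'.2 + 1) * b := by ring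
          _ ≤ b ^ kc'.1 * b := Nat.mul_le_mul_right _ h4
        omega
      · rw [hq, dec_zero] at hkc'; simp at hkc'

lemma dec_card {b : ℕ} (hb : 2 ≤ b) :
    ∀ L a, a ≤ b ^ L → (dec b L a).card ≤ b * L + 1 := by
  intro L
  induction L with
  | zero =>
    intro a ha
    have ha1 : a ≤ 1 := by simpa using ha
    interval_cases a <;> simp [dec]
  | succ L ih =>
    intro a ha
    have hbL : 0 < b ^ L := pow_pos (by omega) _
    have hps : b ^ (L+1) = b ^ L * b := pow_succ b L
    have hq : a / b ^ L ≤ b := by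
      rw [Nat.div_le_iff_le_mul_add_pred hbL]
      omega
    calc (dec b (L+1) a).card
        ≤ ((Finset.range (a / b ^ L)).image fun t => ((1:ℕ), t)).card
          + ((dec b L (a % b ^ L)).image fun kc => (kc.1 + 1, a / b ^ L + kc.2 * b)).card := by
          exact Finset.card_union_le _ _
      _ ≤ (a / b ^ L) + (dec b L (a % b ^ L)).card :=
          add_le_add (le_trans Finset.card_image_le (by simp)) Finset.card_image_le
      _ ≤ b + (b * L + 1) := by
          gcongr
          exact ih _ (le_of_lt (Nat.mod_lt _ hbL))
      _ ≤ b * (L+1) + 1 := by ring_nf; omega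

lemma dec_sum_succ {b : ℕ} (hb : 2 ≤ b) (L a : ℕ) (F : ℕ × ℕ → ℝ) :
    ∑ kc ∈ dec b (L+1) a, F kc =
      (∑ t ∈ Finset.range (a / b ^ L), F (1, t))
        + ∑ kc ∈ dec b L (a % b ^ L), F (kc.1 + 1, a / b ^ L + kc.2 * b) := by
  have hbL : 0 < b ^ L := pow_pos (by omega) _
  have hdisj : Disjoint ((Finset.range (a / b ^ L)).image fun t => ((1:ℕ), t))
      ((dec b L (a % b ^ L)).image fun kc => (kc.1 + 1, a / b ^ L + kc.2 * b)) := by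
    rw [Finset.disjoint_left]
    rintro ⟨k, c⟩ h1 h2
    simp only [Finset.mem_image, Finset.mem_range, Prod.mk.injEq] at h1 h2
    obtain ⟨t, ht, h1k, h1c⟩ := h1
    obtain ⟨kc', hkc', h2k, h2c⟩ := h2
    have hk0 : kc'.1 = 0 := by omega
    have hc0 : kc'.2 < b ^ kc'.1 := dec_mem hb L _ (le_of_lt (Nat.mod_lt _ hbL)) _ hkc'
    rw [hk0] at hc0
    simp at hc0
    omega
  show ∑ kc ∈ _ ∪ _, F kc = _
  rw [Finset.sum_union hdisj, Finset.sum_image (by intro x _ y _ h; simpa using h),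
    Finset.sum_image]
  intro x _ y _ h
  simp only [Prod.mk.injEq] at h
  have hb0 : 0 < b := by omega
  have : x.2 = y.2 := by
    have := h.2
    exact Nat.eq_of_mul_eq_mul_right hb0 (by omega)
  exact Prod.ext (by omega) this

lemma dec_measure {b : ℕ} (hb : 2 ≤ b) :
    ∀ L a, a ≤ b ^ L → ∑ kc ∈ dec b L a, ((b:ℝ) ^ kc.1)⁻¹ = (a : ℝ) / (b:ℝ) ^ L := by
  intro L
  induction L with
  | zero =>
    intro a ha
    have ha1 : a ≤ 1 := by simpa using ha
    interval_cases a <;> simp [dec]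
  | succ L ih =>
    intro a ha
    have hbL : 0 < b ^ L := pow_pos (by omega) _
    have hbR : (0:ℝ) < (b:ℝ) := by positivity
    have hbLR : (0:ℝ) < (b:ℝ) ^ L := by positivity
    rw [dec_sum_succ hb]
    have h1 : ∑ t ∈ Finset.range (a / b ^ L), (((b:ℝ) ^ (1:ℕ))⁻¹) = (a / b ^ L : ℕ) * ((b:ℝ))⁻¹ := by
      rw [Finset.sum_const, Finset.card_range]
      simp [nsmul_eq_mul]
    have h2 : ∑ kc ∈ dec b L (a % b ^ L), ((b:ℝ) ^ (kc.1 + 1))⁻¹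
        = ((a % b ^ L : ℕ) : ℝ) / (b:ℝ) ^ L * ((b:ℝ))⁻¹ := by
      rw [← ih _ (le_of_lt (Nat.mod_lt _ hbL))]
      rw [Finset.sum_mul]
      refine Finset.sum_congr rfl fun kc _ => ?_
      rw [pow_succ, mul_inv]
    simp only [h1, h2]
    have key : (b:ℝ) ^ L * ((a / b ^ L : ℕ) : ℝ) + ((a % b ^ L : ℕ) : ℝ) = (a : ℝ) := by
      have h := Nat.div_add_mod a (b ^ L)
      have : ((b ^ L * (a / b ^ L) + a % b ^ L : ℕ) : ℝ) = (a:ℝ) := by rw [h]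
      push_cast at this
      linarith
    rw [← key, pow_succ]
    field_simp

lemma dec_indicator {b : ℕ} (hb : 2 ≤ b) :
    ∀ L a, a ≤ b ^ L → ∀ n : ℕ,
      (if radInv b n < (a:ℝ) / (b:ℝ) ^ L then (1:ℝ) else 0)
        = ∑ kc ∈ dec b L a, if n % b ^ kc.1 = kc.2 then (1:ℝ) else 0 := by
  intro L
  induction L with
  | zero =>
    intro a ha n
    have ha1 : a ≤ 1 := by simpa using ha
    interval_cases a
    · simp [dec, not_lt.2 (radInv_nonneg b n)]
    · have hd : dec b 0 1 = {(0,0)} := by simp [dec]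
      rw [hd, Finset.sum_singleton]
      simp [radInv_lt_one hb n, Nat.mod_one]
  | succ L ih =>
    intro a ha n
    have hbL : 0 < b ^ L := pow_pos (by omega) _
    have hbR : (0:ℝ) < (b:ℝ) := by positivity
    have hbLR : (0:ℝ) < (b:ℝ) ^ L := by positivity
    rw [dec_sum_succ hb]
    set q := a / b ^ L with hq
    set s := a % b ^ L with hs
    have hqb : q ≤ b := by
      have hps : b ^ (L+1) = b ^ L * b := pow_succ b L
      rw [hq, Nat.div_le_iff_le_mul_add_pred hbL]
      omega
    have h1 : (∑ t ∈ Finset.range q, if n % b ^ (1:ℕ) = t then (1:ℝ) else 0)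
        = if n % b < q then 1 else 0 := by
      simp [Finset.sum_ite_eq, pow_one]
    -- key arithmetic characterization
    have hrec : radInv b n = ((n % b : ℕ) + radInv b (n / b)) / b := radInv_rec hb n
    have hr0 : 0 ≤ radInv b (n / b) := radInv_nonneg _ _
    have hr1 : radInv b (n / b) < 1 := radInv_lt_one hb _
    have hsL : ((s:ℕ):ℝ) / (b:ℝ) ^ L < 1 := by
      rw [div_lt_one hbLR]
      exact_mod_cast Nat.mod_lt _ hbL
    have hsL0 : (0:ℝ) ≤ ((s:ℕ):ℝ) / (b:ℝ) ^ L := by positivity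
    have hkey : (a : ℝ) / (b:ℝ) ^ (L+1) = ((q:ℝ) + ((s:ℕ):ℝ) / (b:ℝ) ^ L) / b := by
      have h := Nat.div_add_mod a (b ^ L)
      have hcast : ((b ^ L * q + s : ℕ) : ℝ) = (a:ℝ) := by rw [h]
      push_cast at hcast
      rw [pow_succ]
      field_simp
      linarith
    have hiff : radInv b n < (a:ℝ) / (b:ℝ) ^ (L+1)
        ↔ (n % b < q ∨ (n % b = q ∧ radInv b (n / b) < ((s:ℕ):ℝ) / (b:ℝ) ^ L)) := by
      rw [hrec, hkey, div_lt_div_iff_of_pos_right hbR]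
      constructor
      · intro h
        rcases Nat.lt_trichotomy (n % b) q with hlt | heq | hgt
        · exact Or.inl hlt
        · refine Or.inr ⟨heq, ?_⟩
          rw [heq] at h
          linarith
        · exfalso
          have : (q:ℝ) + 1 ≤ ((n % b : ℕ):ℝ) := by exact_mod_cast hgt
          linarith
      · rintro (hlt | ⟨heq, hless⟩)
        · have : ((n % b : ℕ):ℝ) + 1 ≤ (q:ℝ) := by exact_mod_cast hlt
          linarith
        · rw [heq]; linarith
    rcases eq_or_lt_of_le hqb with hqeq | hqlt
    · -- a = b^(L+1), s = 0
      have hdiv : a / b ^ L = b := by rw [← hq, hqeq]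
      have haeq : a = b ^ (L+1) := by
        refine le_antisymm ha ?_
        have h := Nat.div_mul_le_self a (b ^ L)
        rw [hdiv] at h
        rw [pow_succ]
        have : b ^ L * b = b * b ^ L := Nat.mul_comm _ _
        omega
      have hs0 : s = 0 := by
        rw [hs, haeq, pow_succ, Nat.mul_mod_right]
      rw [hs0, dec_zero]
      simp only [Finset.sum_empty, add_zero, h1]
      have hcond : radInv b n < (a:ℝ) / (b:ℝ) ^ (L+1) := by
        rw [haeq]
        push_cast
        rw [div_self (ne_of_gt (by positivity : (0:ℝ) < (b:ℝ) ^ (L+1)))]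
        exact radInv_lt_one hb n
      rw [if_pos hcond, if_pos]
      rw [← hqeq]
      exact Nat.mod_lt _ (by omega)
    · -- q < b
      have h2 : (∑ kc ∈ dec b L s, if n % b ^ (kc.1 + 1) = q + kc.2 * b then (1:ℝ) else 0)
          = if n % b = q then (if radInv b (n / b) < ((s:ℕ):ℝ) / (b:ℝ) ^ L then (1:ℝ) else 0) else 0 := by
        have hsplit : ∀ kc : ℕ × ℕ, kc ∈ dec b L s →
            ((n % b ^ (kc.1 + 1) = q + kc.2 * b) ↔ (n % b = q ∧ (n / b) % b ^ kc.1 = kc.2)) := by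
          intro kc hkc
          have hc : kc.2 < b ^ kc.1 := dec_mem hb L _ (le_of_lt (Nat.mod_lt _ hbL)) _ hkc
          have hkeym : n % b ^ (kc.1 + 1) = n % b + b * ((n / b) % b ^ kc.1) := by
            rw [pow_succ']
            exact Nat.mod_mul
          rw [hkeym]
          constructor
          · intro h
            have hm : n % b < b := Nat.mod_lt _ (by omega)
            have hmod : (n % b + b * ((n / b) % b ^ kc.1)) % b = (q + kc.2 * b) % b := by rw [h]
            rw [Nat.add_mul_mod_self_left, Nat.add_mul_mod_self_right,
              Nat.mod_eq_of_lt hm, Nat.mod_eq_of_lt hqlt] at hmod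
            refine ⟨hmod, ?_⟩
            have hcomm : kc.2 * b = b * kc.2 := Nat.mul_comm _ _
            have hbx : b * ((n / b) % b ^ kc.1) = b * kc.2 := by omega
            exact Nat.eq_of_mul_eq_mul_left (by omega) hbx
          · rintro ⟨hq2, hc2⟩
            rw [hq2, hc2, Nat.mul_comm]
        rw [Finset.sum_congr rfl (fun kc hkc => if_congr (hsplit kc hkc) rfl rfl)]
        by_cases hnb : n % b = q
        · simp only [hnb, true_and, if_true]
          exact (ih s (le_of_lt (Nat.mod_lt _ hbL)) (n / b)).symm
        · simp [hnb]
      rw [h1, h2]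
      by_cases hA : n % b < q
      · have hB : ¬ n % b = q := by omega
        have hL : radInv b n < (a:ℝ) / (b:ℝ) ^ (L+1) := hiff.2 (Or.inl hA)
        simp [hA, hB, hL]
      · by_cases hB : n % b = q
        · simp only [if_neg hA, if_pos hB, zero_add]
          by_cases hC : radInv b (n / b) < ((s:ℕ):ℝ) / (b:ℝ) ^ L
          · have hL : radInv b n < (a:ℝ) / (b:ℝ) ^ (L+1) := hiff.2 (Or.inr ⟨hB, hC⟩)
            simp [hL, hC]
          · have hL : ¬ radInv b n < (a:ℝ) / (b:ℝ) ^ (L+1) := by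
              intro h
              rcases hiff.1 h with h' | h'
              · exact hA h'
              · exact hC h'.2
            simp [hL, hC]
        · have hL : ¬ radInv b n < (a:ℝ) / (b:ℝ) ^ (L+1) := by
            intro h
            rcases hiff.1 h with h' | h'
            · exact hA h'
            · exact hB h'.1
          simp [hL, hA, hB]

lemma crt_exists {d : ℕ} (m : Fin d → ℕ)
    (hcop : ∀ i j, i ≠ j → (m i).Coprime (m j)) (r : Fin d → ℕ) :
    ∀ s : Finset (Fin d), ∃ c : ℕ, ∀ n : ℕ,
      (∀ i ∈ s, n % m i = r i % m i) ↔ n % (∏ i ∈ s, m i) = c % (∏ i ∈ s, m i) := by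
  intro s
  induction s using Finset.induction_on with
  | empty => exact ⟨0, fun n => by simp [Nat.mod_one]⟩
  | @insert j s' hj ih =>
    obtain ⟨c', hc'⟩ := ih
    have hcp : (m j).Coprime (∏ i ∈ s', m i) :=
      Nat.Coprime.prod_right fun i hi => hcop j i (fun h => hj (h ▸ hi))
    obtain ⟨c, hc1, hc2⟩ := Nat.chineseRemainder hcp (r j) c'
    refine ⟨c, fun n => ?_⟩
    rw [Finset.prod_insert hj]
    constructor
    · intro h
      have h1 : n ≡ c [MOD m j] := by
        have := h j (Finset.mem_insert_self j s')
        exact Nat.ModEq.trans this hc1.symm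
      have h2 : n ≡ c [MOD ∏ i ∈ s', m i] := by
        have := (hc' n).1 fun i hi => h i (Finset.mem_insert_of_mem hi)
        exact Nat.ModEq.trans this hc2.symm
      exact (Nat.modEq_and_modEq_iff_modEq_mul hcp).1 ⟨h1, h2⟩
    · intro h
      have h12 := (Nat.modEq_and_modEq_iff_modEq_mul hcp).2 h
      intro i hi
      rcases Finset.mem_insert.1 hi with rfl | hi'
      · exact Nat.ModEq.trans h12.1 hc1
      · exact (hc' n).2 (Nat.ModEq.trans h12.2 hc2) i hi'

lemma count_residue (N M c : ℕ) (hM : 0 < M) :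
    |(((Finset.range N).filter (fun n => n % M = c % M)).card : ℝ) - (N:ℝ) / M| ≤ 1 := by
  set cnt := ((Finset.range N).filter (fun n => n % M = c % M)).card with hcnt
  have hcM : c % M < M := Nat.mod_lt _ hM
  -- lower bound : N / M ≤ cnt (nat division)
  have hlow : N / M ≤ cnt := by
    have : (Finset.range (N / M)).card ≤ cnt := by
      apply Finset.card_le_card_of_injOn (fun t => c % M + M * t)
      · intro t ht
        simp only [Finset.mem_coe, Finset.mem_range] at ht
        simp only [Finset.mem_coe, Finset.mem_filter, Finset.mem_range]
        constructor
        · calc c % M + M * t < M + M * t := by omega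
          _ = (t + 1) * M := by ring
          _ ≤ (N / M) * M := Nat.mul_le_mul_right _ (by omega)
          _ ≤ N := Nat.div_mul_le_self _ _
        · simp [Nat.add_mul_mod_self_left, Nat.mod_mod_of_dvd]
      · intro x _ y _ h
        simp only at h
        have hxy : M * x = M * y := by omega
        exact Nat.eq_of_mul_eq_mul_left hM hxy
    simpa using this
  -- upper bound : cnt ≤ N / M + 1
  have hup : cnt ≤ N / M + 1 := by
    have : cnt ≤ (Finset.range (N / M + 1)).card := by
      apply Finset.card_le_card_of_injOn (fun n => n / M)
      · intro n hn
        simp only [Finset.mem_coe, Finset.mem_filter, Finset.mem_range] at hn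
        simp only [Finset.mem_coe, Finset.mem_range]
        have : n / M ≤ N / M := Nat.div_le_div_right (Nat.le_of_lt hn.1)
        omega
      · intro x hx y hy h
        simp only [Finset.mem_coe, Finset.mem_filter, Finset.mem_range] at hx hy
        simp only at h
        have hx2 := Nat.div_add_mod x M
        have hy2 := Nat.div_add_mod y M
        rw [hx.2] at hx2
        rw [hy.2] at hy2
        rw [h] at hx2
        omega
    simpa using this
  have hNlt : N < (N / M) * M + M := by
    have h1 := Nat.div_add_mod N M
    have h2 : N % M < M := Nat.mod_lt _ hM
    have : M * (N / M) = (N / M) * M := Nat.mul_comm _ _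
    omega
  have hdm : (N / M) * M ≤ N := Nat.div_mul_le_self _ _
  have hMR : (0:ℝ) < (M:ℝ) := by exact_mod_cast hM
  rw [abs_le]
  constructor
  · have hN : (N:ℝ) ≤ (cnt:ℝ) * M + M := by
      have : N ≤ cnt * M + M := by
        have := Nat.mul_le_mul_right M hlow
        omega
      exact_mod_cast this
    have hdivle : (N:ℝ) / M ≤ (cnt:ℝ) + 1 := by
      rw [div_le_iff₀ hMR]
      nlinarith
    linarith
  · have h3 : (cnt:ℝ) * M ≤ N + M := by
      have : cnt * M ≤ N + M := by
        have := Nat.mul_le_mul_right M hup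
        have h4 : (N / M + 1) * M = (N / M) * M + M := by ring
        omega
      exact_mod_cast this
    have h5 : (cnt:ℝ) ≤ ((N:ℝ) + M) / M := by
      rw [le_div_iff₀ hMR]
      linarith
    have h6 : ((N:ℝ) + M) / M = N / M + 1 := by field_simp
    linarith

lemma grid {d : ℕ} (b : Fin d → ℕ) (hb : ∀ i, 2 ≤ b i)
    (hcop : ∀ i j, i ≠ j → (b i).Coprime (b j))
    (L a : Fin d → ℕ) (ha : ∀ i, a i ≤ b i ^ L i) (N : ℕ) :
    |(∑ n ∈ Finset.range N, ∏ i, if radInv (b i) n < (a i : ℝ) / (b i : ℝ) ^ L i then (1:ℝ) else 0)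
       - N * ∏ i, ((a i : ℝ) / (b i : ℝ) ^ L i)|
      ≤ ∏ i, ((b i : ℝ) * L i + 1) := by
  classical
  set D : ∀ _ : Fin d, Finset (ℕ × ℕ) := fun i => dec (b i) (L i) (a i) with hD
  have step1 : ∀ n : ℕ, (∏ i, if radInv (b i) n < (a i : ℝ) / (b i : ℝ) ^ L i then (1:ℝ) else 0)
      = ∑ f ∈ Fintype.piFinset D, ∏ i, (if n % (b i) ^ (f i).1 = (f i).2 then (1:ℝ) else 0) := by
    intro n
    rw [Finset.prod_congr rfl (fun i _ => dec_indicator (hb i) (L i) (a i) (ha i) n)]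
    exact Finset.prod_univ_sum _ _
  have step3 : (∏ i, ((a i : ℝ) / (b i : ℝ) ^ L i))
      = ∑ f ∈ Fintype.piFinset D, ∏ i, ((b i : ℝ) ^ (f i).1)⁻¹ := by
    rw [Finset.prod_congr rfl (fun i _ => (dec_measure (hb i) (L i) (a i) (ha i)).symm)]
    exact Finset.prod_univ_sum _ _
  have hswap : (∑ n ∈ Finset.range N, ∏ i, if radInv (b i) n < (a i : ℝ) / (b i : ℝ) ^ L i then (1:ℝ) else 0)
      = ∑ f ∈ Fintype.piFinset D, ∑ n ∈ Finset.range N,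
          ∏ i, (if n % (b i) ^ (f i).1 = (f i).2 then (1:ℝ) else 0) := by
    rw [Finset.sum_congr rfl (fun n _ => step1 n)]
    exact Finset.sum_comm
  rw [hswap, step3, Finset.mul_sum, ← Finset.sum_sub_distrib]
  have hterm : ∀ f ∈ Fintype.piFinset D,
      |(∑ n ∈ Finset.range N, ∏ i, (if n % (b i) ^ (f i).1 = (f i).2 then (1:ℝ) else 0))
        - N * ∏ i, ((b i : ℝ) ^ (f i).1)⁻¹| ≤ 1 := by
    intro f hf
    have hfm : ∀ i, f i ∈ D i := by
      intro i
      exact Fintype.mem_piFinset.1 hf i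
    set m : Fin d → ℕ := fun i => (b i) ^ (f i).1 with hm
    have hmpos : ∀ i, 0 < m i := fun i => pow_pos (by have := hb i; omega) _
    have hc : ∀ i, (f i).2 < m i := fun i => dec_mem (hb i) (L i) (a i) (ha i) _ (hfm i)
    have hmcop : ∀ i j, i ≠ j → (m i).Coprime (m j) :=
      fun i j hij => Nat.Coprime.pow _ _ (hcop i j hij)
    obtain ⟨c₀, hc₀⟩ := crt_exists m hmcop (fun i => (f i).2) Finset.univ
    set M := ∏ i, m i with hM
    have hMpos : 0 < M := Finset.prod_pos fun i _ => hmpos i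
    have hsum : (∑ n ∈ Finset.range N, ∏ i, (if n % m i = (f i).2 then (1:ℝ) else 0))
        = (((Finset.range N).filter (fun n => n % M = c₀ % M)).card : ℝ) := by
      have hcond : ∀ n : ℕ, (∏ i, (if n % m i = (f i).2 then (1:ℝ) else 0))
          = if n % M = c₀ % M then (1:ℝ) else 0 := by
        intro n
        have hiff : (∀ i, n % m i = (f i).2) ↔ n % M = c₀ % M := by
          rw [← hc₀ n]
          constructor
          · intro h i _
            rw [h i, Nat.mod_eq_of_lt (hc i)]
          · intro h i
            have := h i (Finset.mem_univ i)
            rwa [Nat.mod_eq_of_lt (hc i)] at this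
        by_cases hP : n % M = c₀ % M
        · rw [if_pos hP]
          exact Finset.prod_eq_one fun i _ => if_pos (hiff.2 hP i)
        · rw [if_neg hP]
          have hex : ∃ i, ¬ (n % m i = (f i).2) := by
            by_contra hcon
            push_neg at hcon
            exact hP (hiff.1 hcon)
          obtain ⟨i0, hi0⟩ := hex
          exact Finset.prod_eq_zero (Finset.mem_univ i0) (if_neg hi0)
      rw [Finset.sum_congr rfl fun n _ => hcond n, Finset.sum_boole]
    have hprod : (∏ i, ((b i : ℝ) ^ (f i).1)⁻¹) = ((M:ℝ))⁻¹ := by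
      rw [hM]
      push_cast
      rw [← Finset.prod_inv_distrib]
      refine Finset.prod_congr rfl fun i _ => ?_
      rw [show m i = b i ^ (f i).1 from rfl]
      push_cast
      rfl
    rw [hsum, hprod]
    have := count_residue N M c₀ hMpos
    have hMne : (M:ℝ) ≠ 0 := by positivity
    rw [div_eq_mul_inv] at this
    exact this
  calc |∑ f ∈ Fintype.piFinset D,
      ((∑ n ∈ Finset.range N, ∏ i, (if n % (b i) ^ (f i).1 = (f i).2 then (1:ℝ) else 0))
        - N * ∏ i, ((b i : ℝ) ^ (f i).1)⁻¹)|
      ≤ ∑ f ∈ Fintype.piFinset D, |(∑ n ∈ Finset.range N, ∏ i, (if n % (b i) ^ (f i).1 = (f i).2 then (1:ℝ) else 0))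
        - N * ∏ i, ((b i : ℝ) ^ (f i).1)⁻¹| := Finset.abs_sum_le_sum_abs _ _
    _ ≤ ∑ f ∈ Fintype.piFinset D, 1 := Finset.sum_le_sum hterm
    _ = ((Fintype.piFinset D).card : ℝ) := by rw [Finset.sum_const]; simp
    _ ≤ ∏ i, ((b i : ℝ) * L i + 1) := by
        rw [Fintype.card_piFinset]
        have hcard : ∀ i, (D i).card ≤ b i * L i + 1 :=
          fun i => dec_card (hb i) (L i) (a i) (ha i)
        calc ((∏ i, (D i).card : ℕ) : ℝ) ≤ ((∏ i, (b i * L i + 1) : ℕ) : ℝ) := by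
              exact_mod_cast Finset.prod_le_prod' fun i _ => hcard i
        _ = ∏ i, ((b i : ℝ) * L i + 1) := by push_cast; rfl

lemma prod_sub_le {d : ℕ} (w w' : Fin d → ℝ) (h : ∀ i, 0 ≤ w' i ∧ w' i ≤ w i ∧ w i ≤ 1) :
    ∀ s : Finset (Fin d), ∏ i ∈ s, w i - ∏ i ∈ s, w' i ≤ ∑ i ∈ s, (w i - w' i) := by
  intro s
  induction s using Finset.induction_on with
  | empty => simp
  | @insert j s hj ih =>
    rw [Finset.prod_insert hj, Finset.prod_insert hj, Finset.sum_insert hj]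
    have hQ0 : 0 ≤ ∏ i ∈ s, w' i := Finset.prod_nonneg fun i _ => (h i).1
    have hQ1 : ∏ i ∈ s, w' i ≤ 1 := Finset.prod_le_one (fun i _ => (h i).1)
      (fun i _ => le_trans (h i).2.1 (h i).2.2)
    have hPQ : ∏ i ∈ s, w' i ≤ ∏ i ∈ s, w i :=
      Finset.prod_le_prod (fun i _ => (h i).1) (fun i _ => (h i).2.1)
    have hj0 : 0 ≤ w' j := (h j).1
    have hj1 : w j ≤ 1 := (h j).2.2
    have hj2 : w' j ≤ w j := (h j).2.1
    nlinarith [ih]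

lemma anchored {d : ℕ} (b : Fin d → ℕ) (hb : ∀ i, 2 ≤ b i)
    (hcop : ∀ i j, i ≠ j → (b i).Coprime (b j))
    (L : Fin d → ℕ) (N : ℕ) (hN : 1 ≤ N) (hL : ∀ i, N ≤ b i ^ L i)
    (w : Fin d → ℝ) (hw : ∀ i, 0 ≤ w i ∧ w i ≤ 1) :
    |(∑ n ∈ Finset.range N, ∏ i, if radInv (b i) n < w i then (1:ℝ) else 0)
       - N * ∏ i, w i| ≤ (∏ i, ((b i : ℝ) * L i + 1)) + d := by
  classical
  set B : Fin d → ℝ := fun i => (b i : ℝ) ^ L i with hB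
  have hBpos : ∀ i, (0:ℝ) < B i := fun i => by
    have := hb i; positivity
  have hBN : ∀ i, (N : ℝ) ≤ B i := fun i => by
    have := hL i
    calc (N:ℝ) ≤ ((b i ^ L i : ℕ) : ℝ) := by exact_mod_cast this
    _ = B i := by push_cast; rfl
  have hNR : (0:ℝ) < N := by exact_mod_cast hN
  set a : Fin d → ℕ := fun i => ⌊w i * B i⌋₊ with haDef
  set ap : Fin d → ℕ := fun i => min (a i + 1) (b i ^ L i) with hapDef
  have hBeq : ∀ i, ((b i ^ L i : ℕ) : ℝ) = B i := fun i => by push_cast; rfl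
  have ha_le : ∀ i, a i ≤ b i ^ L i := by
    intro i
    have h1 : w i * B i ≤ ((b i ^ L i : ℕ) : ℝ) := by
      rw [hBeq i]
      nlinarith [(hw i).2, hBpos i, (hw i).1]
    calc a i ≤ ⌊((b i ^ L i : ℕ) : ℝ)⌋₊ := Nat.floor_le_floor h1
    _ = b i ^ L i := Nat.floor_natCast _
  have hap_le : ∀ i, ap i ≤ b i ^ L i := fun i => min_le_right _ _
  have hlow : ∀ i, (a i : ℝ) / B i ≤ w i := by
    intro i
    rw [div_le_iff₀ (hBpos i)]
    exact Nat.floor_le (by nlinarith [(hw i).1, hBpos i])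
  have hupp : ∀ i, w i < ((a i : ℝ) + 1) / B i := by
    intro i
    rw [lt_div_iff₀ (hBpos i)]
    exact Nat.lt_floor_add_one _
  have hw_le_ap : ∀ i, w i ≤ (ap i : ℝ) / B i := by
    intro i
    have hcast : ((ap i : ℕ) : ℝ) = min ((a i : ℝ) + 1) (B i) := by
      rw [hapDef]
      push_cast [Nat.cast_min]
      rfl
    rw [hcast, ← min_div_div_right (le_of_lt (hBpos i))]
    refine le_min (le_of_lt (hupp i)) ?_
    rw [div_self (ne_of_gt (hBpos i))]
    exact (hw i).2
  have indnonneg : ∀ (x y : ℝ), 0 ≤ (if x < y then (1:ℝ) else 0) := fun x y => by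
    split_ifs <;> norm_num
  have hind : ∀ (x w1 w2 : ℝ), w1 ≤ w2 →
      (if x < w1 then (1:ℝ) else 0) ≤ (if x < w2 then 1 else 0) := by
    intro x w1 w2 h12
    split_ifs with h1 h2
    · exact le_refl _
    · exact absurd (lt_of_lt_of_le h1 h12) h2
    · norm_num
    · exact le_refl _
  have hap1 : ∀ i, (ap i : ℝ) / B i ≤ 1 := by
    intro i
    rw [div_le_one (hBpos i)]
    calc ((ap i : ℕ) : ℝ) ≤ ((b i ^ L i : ℕ) : ℝ) := by exact_mod_cast hap_le i
    _ = B i := hBeq i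
  have hSlow : (∑ n ∈ Finset.range N, ∏ i, if radInv (b i) n < (a i : ℝ) / B i then (1:ℝ) else 0)
      ≤ (∑ n ∈ Finset.range N, ∏ i, if radInv (b i) n < w i then (1:ℝ) else 0) :=
    Finset.sum_le_sum fun n _ => Finset.prod_le_prod (fun i _ => indnonneg _ _)
      (fun i _ => hind _ _ _ (hlow i))
  have hSupp : (∑ n ∈ Finset.range N, ∏ i, if radInv (b i) n < w i then (1:ℝ) else 0)
      ≤ (∑ n ∈ Finset.range N, ∏ i, if radInv (b i) n < (ap i : ℝ) / B i then (1:ℝ) else 0) :=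
    Finset.sum_le_sum fun n _ => Finset.prod_le_prod (fun i _ => indnonneg _ _)
      (fun i _ => hind _ _ _ (hw_le_ap i))
  have hg1 : |(∑ n ∈ Finset.range N, ∏ i, if radInv (b i) n < (a i : ℝ) / B i then (1:ℝ) else 0)
      - N * ∏ i, ((a i : ℝ) / B i)| ≤ ∏ i, ((b i : ℝ) * L i + 1) :=
    grid b hb hcop L a ha_le N
  have hg2 : |(∑ n ∈ Finset.range N, ∏ i, if radInv (b i) n < (ap i : ℝ) / B i then (1:ℝ) else 0)
      - N * ∏ i, ((ap i : ℝ) / B i)| ≤ ∏ i, ((b i : ℝ) * L i + 1) :=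
    grid b hb hcop L ap hap_le N
  have hdiff1 : ∀ i, w i - (a i : ℝ) / B i ≤ 1 / (N : ℝ) := by
    intro i
    have h1 : w i < ((a i : ℝ) + 1) / B i := hupp i
    have h2 : ((a i : ℝ) + 1) / B i - (a i : ℝ) / B i = 1 / B i := by
      rw [div_sub_div_same]
      ring_nf
    have h3 : 1 / B i ≤ 1 / (N : ℝ) := one_div_le_one_div_of_le hNR (hBN i)
    linarith
  have hdiff2 : ∀ i, (ap i : ℝ) / B i - w i ≤ 1 / (N : ℝ) := by
    intro i
    have h0 : ((ap i : ℕ) : ℝ) ≤ (a i : ℝ) + 1 := by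
      have : ap i ≤ a i + 1 := min_le_left _ _
      exact_mod_cast this
    have h1 : (ap i : ℝ) / B i ≤ ((a i : ℝ) + 1) / B i := by
      gcongr
    have h2 : ((a i : ℝ) + 1) / B i - (a i : ℝ) / B i = 1 / B i := by
      rw [div_sub_div_same]
      ring_nf
    have h3 : 1 / B i ≤ 1 / (N : ℝ) := one_div_le_one_div_of_le hNR (hBN i)
    have h4 := hlow i
    linarith
  have hsum1 : ∑ i, (w i - (a i : ℝ) / B i) ≤ (d : ℝ) / N := by
    calc ∑ i, (w i - (a i : ℝ) / B i) ≤ ∑ _i : Fin d, 1 / (N:ℝ) :=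
          Finset.sum_le_sum fun i _ => hdiff1 i
    _ = (d : ℝ) / N := by
        rw [Finset.sum_const, Finset.card_univ, Fintype.card_fin, nsmul_eq_mul]
        ring
  have hsum2 : ∑ i, ((ap i : ℝ) / B i - w i) ≤ (d : ℝ) / N := by
    calc ∑ i, ((ap i : ℝ) / B i - w i) ≤ ∑ _i : Fin d, 1 / (N:ℝ) :=
          Finset.sum_le_sum fun i _ => hdiff2 i
    _ = (d : ℝ) / N := by
        rw [Finset.sum_const, Finset.card_univ, Fintype.card_fin, nsmul_eq_mul]
        ring
  have hm1 : ∏ i, w i - ∏ i, ((a i : ℝ) / B i) ≤ (d : ℝ) / N := by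
    have := prod_sub_le w (fun i => (a i : ℝ) / B i)
      (fun i => ⟨by positivity, hlow i, (hw i).2⟩) Finset.univ
    exact le_trans this hsum1
  have hm2 : ∏ i, ((ap i : ℝ) / B i) - ∏ i, w i ≤ (d : ℝ) / N := by
    have := prod_sub_le (fun i => (ap i : ℝ) / B i) w
      (fun i => ⟨(hw i).1, hw_le_ap i, hap1 i⟩) Finset.univ
    exact le_trans this hsum2
  have hNd : (N : ℝ) * ((d : ℝ) / N) = d := by field_simp
  rw [abs_le] at hg1 hg2 ⊢
  constructor
  · have h5 : (N:ℝ) * ∏ i, w i ≤ (N:ℝ) * ∏ i, ((a i : ℝ) / B i) + d := by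
      have := mul_le_mul_of_nonneg_left hm1 (le_of_lt hNR)
      rw [mul_sub, hNd] at this
      linarith
    linarith [hg1.1, hSlow]
  · have h5 : (N:ℝ) * ∏ i, ((ap i : ℝ) / B i) ≤ (N:ℝ) * ∏ i, w i + d := by
      have := mul_le_mul_of_nonneg_left hm2 (le_of_lt hNR)
      rw [mul_sub, hNd] at this
      linarith
    linarith [hg2.2, hSupp]

lemma ind_sub (u v x : ℝ) (huv : u ≤ v) :
    (if u ≤ x ∧ x < v then (1:ℝ) else 0)
      = (if x < v then (1:ℝ) else 0) + -(if x < u then (1:ℝ) else 0) := by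
  by_cases h1 : x < u
  · have hn : ¬ (u ≤ x ∧ x < v) := fun h => absurd h.1 (not_le.2 h1)
    rw [if_pos (lt_of_lt_of_le h1 huv), if_pos h1, if_neg hn]
    norm_num
  · by_cases h2 : x < v
    · rw [if_pos ⟨not_lt.1 h1, h2⟩, if_pos h2, if_neg h1]
      norm_num
    · have hn : ¬ (u ≤ x ∧ x < v) := fun h => h2 h.2
      rw [if_neg hn, if_neg h2, if_neg h1]
      norm_num

lemma box {d : ℕ} (b : Fin d → ℕ) (hb : ∀ i, 2 ≤ b i)
    (hcop : ∀ i j, i ≠ j → (b i).Coprime (b j))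
    (L : Fin d → ℕ) (N : ℕ) (hN : 1 ≤ N) (hL : ∀ i, N ≤ b i ^ L i)
    (u v : Fin d → ℝ) (huv : ∀ i, 0 ≤ u i ∧ u i ≤ v i ∧ v i ≤ 1) :
    |(∑ n ∈ Finset.range N,
        if (∀ i, u i ≤ radInv (b i) n ∧ radInv (b i) n < v i) then (1:ℝ) else 0)
       - N * ∏ i, (v i - u i)|
      ≤ 2^d * ((∏ i, ((b i : ℝ) * L i + 1)) + d) := by
  classical
  set W : Finset (Fin d) → Fin d → ℝ := fun t i => if i ∈ t then v i else u i with hW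
  have hsplit : ∀ (t : Finset (Fin d)) (F G : Fin d → ℝ),
      (∏ i ∈ t, F i) * ∏ i ∈ Finset.univ \ t, G i = ∏ i, (if i ∈ t then F i else G i) := by
    intro t F G
    have hu : (Finset.univ : Finset (Fin d)) = t ∪ (Finset.univ \ t) :=
      (Finset.union_sdiff_of_subset (Finset.subset_univ t)).symm
    conv_rhs => rw [hu, Finset.prod_union Finset.disjoint_sdiff]
    congr 1
    · exact Finset.prod_congr rfl fun i hi => (if_pos hi).symm
    · refine Finset.prod_congr rfl fun i hi => ?_
      rw [if_neg (Finset.mem_sdiff.1 hi).2]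
  have hneg : ∀ (t : Finset (Fin d)) (G : Fin d → ℝ),
      (∏ i ∈ Finset.univ \ t, -(G i)) = (-1:ℝ)^(Finset.univ \ t).card * ∏ i ∈ Finset.univ \ t, G i := by
    intro t G
    rw [← Finset.prod_const, ← Finset.prod_mul_distrib]
    exact Finset.prod_congr rfl fun i _ => by ring
  have hexp : ∀ n : ℕ,
      (if (∀ i, u i ≤ radInv (b i) n ∧ radInv (b i) n < v i) then (1:ℝ) else 0)
        = ∑ t ∈ (Finset.univ : Finset (Fin d)).powerset,
            (-1:ℝ)^(Finset.univ \ t).card * ∏ i, (if radInv (b i) n < W t i then (1:ℝ) else 0) := by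
    intro n
    have hb1 : (if ∀ i, u i ≤ radInv (b i) n ∧ radInv (b i) n < v i then (1:ℝ) else 0)
        = ∏ i, (if u i ≤ radInv (b i) n ∧ radInv (b i) n < v i then (1:ℝ) else 0) := by
      by_cases hP : ∀ i, u i ≤ radInv (b i) n ∧ radInv (b i) n < v i
      · rw [if_pos hP]
        exact (Finset.prod_eq_one fun i _ => if_pos (hP i)).symm
      · rw [if_neg hP]
        obtain ⟨i0, hi0⟩ := not_forall.1 hP
        exact (Finset.prod_eq_zero (Finset.mem_univ i0) (if_neg hi0 : _ = (0:ℝ))).symm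
    rw [hb1]
    have h1 : ∀ i ∈ Finset.univ, (if u i ≤ radInv (b i) n ∧ radInv (b i) n < v i then (1:ℝ) else 0)
        = (if radInv (b i) n < v i then (1:ℝ) else 0) + -(if radInv (b i) n < u i then (1:ℝ) else 0) :=
      fun i _ => ind_sub _ _ _ (huv i).2.1
    rw [Finset.prod_congr rfl h1, Finset.prod_add]
    refine Finset.sum_congr rfl fun t _ => ?_
    rw [hneg t, ← mul_assoc, mul_comm (∏ i ∈ t, _) ((-1:ℝ)^(Finset.univ \ t).card), mul_assoc,
      hsplit t]
    congr 1
    refine Finset.prod_congr rfl fun i _ => ?_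
    rw [hW]
    simp only []
    split_ifs <;> rfl
  have hmeas : ∏ i, (v i - u i)
      = ∑ t ∈ (Finset.univ : Finset (Fin d)).powerset,
          (-1:ℝ)^(Finset.univ \ t).card * ∏ i, W t i := by
    have h1 : ∀ i ∈ Finset.univ, v i - u i = v i + -(u i) := fun i _ => by ring
    rw [Finset.prod_congr rfl h1, Finset.prod_add]
    refine Finset.sum_congr rfl fun t _ => ?_
    rw [hneg t, ← mul_assoc, mul_comm (∏ i ∈ t, _) ((-1:ℝ)^(Finset.univ \ t).card), mul_assoc,
      hsplit t]
  rw [Finset.sum_congr rfl fun n _ => hexp n, hmeas, Finset.mul_sum, Finset.sum_comm,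
    ← Finset.sum_sub_distrib]
  have hterm : ∀ t ∈ (Finset.univ : Finset (Fin d)).powerset,
      |(∑ n ∈ Finset.range N, (-1:ℝ)^(Finset.univ \ t).card
          * ∏ i, (if radInv (b i) n < W t i then (1:ℝ) else 0))
        - (N:ℝ) * ((-1:ℝ)^(Finset.univ \ t).card * ∏ i, W t i)|
        ≤ (∏ i, ((b i : ℝ) * L i + 1)) + d := by
    intro t _
    rw [← Finset.mul_sum]
    have heq : (-1:ℝ)^(Finset.univ \ t).card
          * (∑ n ∈ Finset.range N, ∏ i, (if radInv (b i) n < W t i then (1:ℝ) else 0))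
        - (N:ℝ) * ((-1:ℝ)^(Finset.univ \ t).card * ∏ i, W t i)
        = (-1:ℝ)^(Finset.univ \ t).card
          * ((∑ n ∈ Finset.range N, ∏ i, (if radInv (b i) n < W t i then (1:ℝ) else 0))
              - (N:ℝ) * ∏ i, W t i) := by ring
    rw [heq, abs_mul, abs_pow, abs_neg, abs_one, one_pow, one_mul]
    apply anchored b hb hcop L N hN hL
    intro i
    rw [hW]
    simp only []
    split_ifs
    · exact ⟨le_trans (huv i).1 (huv i).2.1, (huv i).2.2⟩
    · exact ⟨(huv i).1, le_trans (huv i).2.1 (huv i).2.2⟩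
  calc |∑ t ∈ (Finset.univ : Finset (Fin d)).powerset,
        ((∑ n ∈ Finset.range N, (-1:ℝ)^(Finset.univ \ t).card
            * ∏ i, (if radInv (b i) n < W t i then (1:ℝ) else 0))
          - (N:ℝ) * ((-1:ℝ)^(Finset.univ \ t).card * ∏ i, W t i))|
      ≤ ∑ t ∈ (Finset.univ : Finset (Fin d)).powerset,
        |(∑ n ∈ Finset.range N, (-1:ℝ)^(Finset.univ \ t).card
            * ∏ i, (if radInv (b i) n < W t i then (1:ℝ) else 0))
          - (N:ℝ) * ((-1:ℝ)^(Finset.univ \ t).card * ∏ i, W t i)| :=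
      Finset.abs_sum_le_sum_abs _ _
    _ ≤ ∑ _t ∈ (Finset.univ : Finset (Fin d)).powerset, ((∏ i, ((b i : ℝ) * L i + 1)) + d) :=
      Finset.sum_le_sum hterm
    _ = 2^d * ((∏ i, ((b i : ℝ) * L i + 1)) + d) := by
      rw [Finset.sum_const, Finset.card_powerset, Finset.card_univ, Fintype.card_fin,
        nsmul_eq_mul]
      push_cast
      ring

theorem stmt14 (d : ℕ) (b : Fin d → ℕ) (hb : ∀ i, 2 ≤ b i)
    (hcop : ∀ i j, i ≠ j → Nat.Coprime (b i) (b j)) :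
    ∃ C > 0, ∀ N : ℕ, 2 ≤ N →
      disc (fun n j => radInv (b j) n) N ≤ C * Real.log N ^ d / N := by
  classical
  have hlog2 : (0:ℝ) < Real.log 2 := Real.log_pos (by norm_num)
  set C₀ : ℝ := (∏ i, (3 * (b i : ℝ) / Real.log 2)) + d * (1 / Real.log 2)^d with hC₀
  set C : ℝ := 2^d * C₀ + 1 with hC
  have hprod_nonneg : (0:ℝ) ≤ ∏ i, (3 * (b i : ℝ) / Real.log 2) :=
    Finset.prod_nonneg fun i _ => by positivity
  have hC₀nonneg : 0 ≤ C₀ := by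
    have : (0:ℝ) ≤ d * (1 / Real.log 2)^d := by positivity
    rw [hC₀]; linarith
  have hCpos : 0 < C := by
    have h2 : (0:ℝ) ≤ 2^d * C₀ := by positivity
    rw [hC]; linarith
  refine ⟨C, hCpos, ?_⟩
  intro N hN
  set L : Fin d → ℕ := fun i => Nat.clog (b i) N with hLdef
  have hL : ∀ i, N ≤ b i ^ L i := fun i => Nat.le_pow_clog (hb i) N
  have hN1 : 1 ≤ N := le_trans (by norm_num) hN
  have hNR : (0:ℝ) < N := by exact_mod_cast hN1
  have h2N : (2:ℝ) ≤ N := by exact_mod_cast hN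
  have hlogN : Real.log 2 ≤ Real.log N := Real.log_le_log (by norm_num) h2N
  have hlogNpos : 0 < Real.log N := lt_of_lt_of_le hlog2 hlogN
  -- bound on L i
  have hLb : ∀ i, (L i : ℝ) ≤ 2 * Real.log N / Real.log 2 := by
    intro i
    have hq : Real.log N / Real.log 2 ≥ 1 := by
      rw [ge_iff_le, le_div_iff₀ hlog2]
      linarith
    rcases Nat.eq_zero_or_pos (L i) with h0 | hpos
    · rw [h0]
      push_cast
      rw [div_eq_mul_inv]
      nlinarith [mul_pos hlogNpos (inv_pos.2 hlog2)]
    · set K := L i - 1 with hK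
      have hLK : L i = K + 1 := by omega
      have hlt : b i ^ K < N := by
        rw [hK, hLdef]
        exact Nat.pow_pred_clog_lt_self (hb i) hN
      have hltR : ((b i : ℝ)) ^ K ≤ (N:ℝ) := by
        calc ((b i : ℝ)) ^ K = ((b i ^ K : ℕ) : ℝ) := by push_cast; rfl
        _ ≤ (N:ℝ) := by exact_mod_cast le_of_lt hlt
      have hbpos : (1:ℝ) < (b i : ℝ) := by
        have := hb i; exact_mod_cast (by omega : 1 < b i)
      have hlogb : Real.log 2 ≤ Real.log (b i) := by
        apply Real.log_le_log (by norm_num)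
        exact_mod_cast hb i
      have hKlog : (K:ℝ) * Real.log (b i) ≤ Real.log N := by
        rw [← Real.log_pow]
        exact Real.log_le_log (by positivity) hltR
      have hK2 : (K:ℝ) * Real.log 2 ≤ Real.log N := by
        nlinarith [Nat.cast_nonneg (α := ℝ) K]
      have hKle : (K:ℝ) ≤ Real.log N / Real.log 2 := by
        rw [le_div_iff₀ hlog2]
        exact hK2
      rw [hLK]
      push_cast
      have : 2 * Real.log N / Real.log 2 = Real.log N / Real.log 2 + Real.log N / Real.log 2 := by
        ring
      rw [this]
      linarith
  -- per-coordinate factor bound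
  have hfac : ∀ i, (b i : ℝ) * L i + 1 ≤ 3 * (b i : ℝ) / Real.log 2 * Real.log N := by
    intro i
    have hbR : (1:ℝ) ≤ (b i : ℝ) := by
      have := hb i; exact_mod_cast (by omega : 1 ≤ b i)
    have h1 : (b i : ℝ) * L i ≤ (b i : ℝ) * (2 * Real.log N / Real.log 2) :=
      mul_le_mul_of_nonneg_left (hLb i) (by linarith)
    have h2 : (1:ℝ) ≤ Real.log N / Real.log 2 := by
      rw [le_div_iff₀ hlog2]; linarith
    have h3 : (b i : ℝ) * (2 * Real.log N / Real.log 2) + Real.log N / Real.log 2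
        = (2 * (b i:ℝ) + 1) * Real.log N / Real.log 2 := by ring
    have h4 : (2 * (b i:ℝ) + 1) * Real.log N / Real.log 2
        ≤ 3 * (b i : ℝ) * Real.log N / Real.log 2 := by
      gcongr
      linarith
    have h5 : Real.log N / Real.log 2 ≤ (b i : ℝ) * (2 * Real.log N / Real.log 2) := by
      have hpos : 0 < Real.log N / Real.log 2 := by positivity
      calc Real.log N / Real.log 2 = 1 * (Real.log N / Real.log 2) := by ring
      _ ≤ (2 * (b i:ℝ)) * (Real.log N / Real.log 2) :=
          mul_le_mul_of_nonneg_right (by linarith) (le_of_lt hpos)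
      _ = (b i:ℝ) * (2 * Real.log N / Real.log 2) := by ring
    calc (b i : ℝ) * L i + 1
        ≤ (b i : ℝ) * (2 * Real.log N / Real.log 2) + Real.log N / Real.log 2 := by linarith
    _ = (2 * (b i:ℝ) + 1) * Real.log N / Real.log 2 := h3
    _ ≤ 3 * (b i : ℝ) * Real.log N / Real.log 2 := h4
    _ = 3 * (b i : ℝ) / Real.log 2 * Real.log N := by ring
  have hE : ∏ i, ((b i:ℝ) * L i + 1)
      ≤ (∏ i, (3 * (b i:ℝ) / Real.log 2)) * Real.log N ^ d := by
    calc ∏ i, ((b i:ℝ) * L i + 1)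
        ≤ ∏ i, (3 * (b i:ℝ) / Real.log 2 * Real.log N) :=
          Finset.prod_le_prod (fun i _ => by positivity) (fun i _ => hfac i)
    _ = (∏ i, (3 * (b i:ℝ) / Real.log 2)) * Real.log N ^ d := by
        rw [Finset.prod_mul_distrib, Finset.prod_const, Finset.card_univ, Fintype.card_fin]
  have h2' : (1:ℝ) ≤ Real.log N / Real.log 2 := by
    rw [le_div_iff₀ hlog2]; linarith
  have hd : (d:ℝ) ≤ (d:ℝ) * (1 / Real.log 2)^d * Real.log N ^ d := by
    have h5 : (1:ℝ) ≤ (Real.log N / Real.log 2) ^ d := one_le_pow₀ h2'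
    have h6 : (1 / Real.log 2) * Real.log N = Real.log N / Real.log 2 := by ring
    have h7 : (1 / Real.log 2)^d * Real.log N ^ d = (Real.log N / Real.log 2)^d := by
      rw [← mul_pow, h6]
    calc (d:ℝ) = d * 1 := by ring
    _ ≤ (d:ℝ) * (Real.log N / Real.log 2)^d :=
        mul_le_mul_of_nonneg_left h5 (Nat.cast_nonneg d)
    _ = (d:ℝ) * (1 / Real.log 2)^d * Real.log N ^ d := by rw [← h7, mul_assoc]
  have hkey : 2^d * ((∏ i, ((b i:ℝ) * L i + 1)) + d) ≤ C * Real.log N ^ d := by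
    have h7 : (∏ i, ((b i:ℝ) * L i + 1)) + (d:ℝ) ≤ C₀ * Real.log N ^ d := by
      rw [hC₀, add_mul]
      exact add_le_add hE (by rw [mul_assoc] at hd ⊢; exact hd)
    calc 2^d * ((∏ i, ((b i:ℝ) * L i + 1)) + (d:ℝ))
        ≤ 2^d * (C₀ * Real.log N ^ d) :=
          mul_le_mul_of_nonneg_left h7 (by positivity)
    _ = (2^d * C₀) * Real.log N ^ d := by ring
    _ ≤ C * Real.log N ^ d := by
        rw [hC]
        nlinarith [pow_nonneg (le_of_lt hlogNpos) d]
  unfold disc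
  apply Real.sSup_le
  · rintro r ⟨u, v, huv, rfl⟩
    have hbox := box b hb hcop L N hN1 hL u v huv
    set P : ℕ → Prop := fun n => ∀ i, u i ≤ radInv (b i) n ∧ radInv (b i) n < v i with hPdef
    have h1 : {n : ℕ | n < N ∧ P n} = ↑((Finset.range N).filter P) := by
      ext n
      simp [Finset.mem_filter, Finset.mem_range]
    have h2 : (Nat.card {n : ℕ // n < N ∧ P n} : ℝ) = (((Finset.range N).filter P).card : ℝ) := by
      have hc := Nat.card_coe_set_eq {n : ℕ | n < N ∧ P n}
      have hc2 : ({n : ℕ | n < N ∧ P n}).ncard = ((Finset.range N).filter P).card := by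
        rw [h1, Set.ncard_coe_finset]
      exact_mod_cast hc.trans hc2
    have h3 : (((Finset.range N).filter P).card : ℝ)
        = ∑ n ∈ Finset.range N, (if P n then (1:ℝ) else 0) := (Finset.sum_boole _ _).symm
    have habs : |(Nat.card {n : ℕ // n < N ∧ P n} : ℝ) / N - ∏ i, (v i - u i)|
        ≤ C * Real.log N ^ d / N := by
      rw [h2, h3]
      have hrw : (∑ n ∈ Finset.range N, if P n then (1:ℝ) else 0) / N - ∏ i, (v i - u i)
          = ((∑ n ∈ Finset.range N, if P n then (1:ℝ) else 0) - N * ∏ i, (v i - u i)) / N := by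
        field_simp
      rw [hrw, abs_div, abs_of_pos hNR]
      gcongr
      exact le_trans hbox hkey
    exact habs
  · apply div_nonneg _ (le_of_lt hNR)
    exact mul_nonneg (le_of_lt hCpos) (pow_nonneg (le_of_lt hlogNpos) d)
end

section
/- Assume Moser's conjecture: there is a constant B such that for every N ∈ ℕ, N ≥ 2, there is an a ∈ ℕ with 1 ≤ a < N, gcd(a,N) = 1, such that the sum of all partial quotients in the continued fraction expansion of a/N is at most B·log N. Then there is a constant C(B) > 0 such that for every N ≥ 2 there exists a ∈ ℕ with 1 ≤ a < N, gcd(a,N) = 1, such that the discrepancy D_N of the 2-dimensional lattice point set ({n/N}, {n a/N})_{n=0,…,N−1} satisfies D_N ≤ C(B) · (log N) / N. -/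
open Real

/-- The value of the continued fraction `[0; c₁, c₂, …, c_r]` given by a list of
partial quotients: `cfVal [c₁, …, c_r] = 1/(c₁ + 1/(c₂ + ⋯ + 1/c_r))`. -/
def cfVal : List ℕ → ℚ
  | [] => 0
  | c :: l => 1 / (c + cfVal l)

def cdiv (X a : ℤ) : ℤ := -((-X) / a)

lemma cdiv_le {a : ℤ} (ha : 0 < a) {X n : ℤ} : cdiv X a ≤ n ↔ X ≤ n * a := by
  unfold cdiv
  rw [neg_le, Int.le_ediv_iff_mul_le ha]
  constructor <;> intro h <;> linarith

lemma lt_cdiv {a : ℤ} (ha : 0 < a) {X n : ℤ} : n < cdiv X a ↔ n * a < X := by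
  unfold cdiv
  rw [lt_neg, Int.ediv_lt_iff_lt_mul ha]
  constructor <;> intro h <;> linarith

lemma cdiv_add {a : ℤ} (ha : 0 < a) (X T : ℤ) :
    cdiv (X + T) a = cdiv X a + T / a + (if (-X) % a < T % a then 1 else 0) := by
  have hXdm := Int.mul_ediv_add_emod (-X) a
  have hTdm := Int.mul_ediv_add_emod T a
  set k := (-X) / a with hk
  set s := (-X) % a with hs
  set q := T / a with hq
  set t := T % a with ht
  have hs0 : 0 ≤ s := Int.emod_nonneg _ (by omega)
  have hsa : s < a := Int.emod_lt_of_pos _ ha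
  have ht0 : 0 ≤ t := Int.emod_nonneg _ (by omega)
  have hta : t < a := Int.emod_lt_of_pos _ ha
  have hXc : cdiv X a = -k := by unfold cdiv; rw [← hk]
  have h1 : -(X + T) = (s - t) + (k - q) * a := by ring_nf; linarith
  have h2 : cdiv (X + T) a = -((s - t) / a) - (k - q) := by
    unfold cdiv
    rw [h1, Int.add_mul_ediv_right _ _ (by omega : a ≠ 0)]
    ring
  rcases le_or_gt t s with hle | hlt
  · have : (s - t) / a = 0 := Int.ediv_eq_zero_of_lt (by omega) (by omega)
    rw [h2, this, hXc, if_neg (by omega)]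
    ring
  · have hge : -1 ≤ (s - t) / a := by
      rw [Int.le_ediv_iff_mul_le ha]; omega
    have hlt2 : (s - t) / a < 0 := by
      rw [Int.ediv_lt_iff_lt_mul ha]; omega
    have : (s - t) / a = -1 := by omega
    rw [h2, this, hXc, if_pos (by omega)]
    ring

noncomputable def Fc (N a β M T : ℤ) : ℕ :=
  ((Finset.Ico 0 M).filter (fun n => (β + n * a) % N < T)).card

noncomputable def gS (N a β M T m : ℤ) : Finset ℤ :=
  (Finset.Ico 0 M).filter (fun n => m * N ≤ β + n * a ∧ β + n * a < m * N + T)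

noncomputable def hSet (N a β T m : ℤ) : Finset ℤ :=
  Finset.Ico (cdiv (m * N - β) a) (cdiv (m * N - β + T) a)

lemma mem_hSet {a : ℤ} (ha : 0 < a) {N β T m n : ℤ} :
    n ∈ hSet N a β T m ↔ m * N ≤ β + n * a ∧ β + n * a < m * N + T := by
  simp only [hSet, Finset.mem_Ico, cdiv_le ha, lt_cdiv ha]
  constructor <;> intro h <;> constructor <;> linarith [h.1, h.2]

lemma gS_subset {a : ℤ} (ha : 0 < a) (N β M T m : ℤ) :
    gS N a β M T m ⊆ hSet N a β T m := by
  intro n hn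
  simp only [gS, Finset.mem_filter] at hn
  exact (mem_hSet ha).mpr hn.2

lemma hSet_card {a : ℤ} (ha : 0 < a) {T : ℤ} (hT : 0 ≤ T) (N β m : ℤ) :
    ((hSet N a β T m).card : ℤ)
      = T / a + (if (β - m * N) % a < T % a then 1 else 0) := by
  have hq0 : 0 ≤ T / a := Int.ediv_nonneg hT ha.le
  rw [hSet, Int.card_Ico, cdiv_add ha (m * N - β) T,
    show -(m * N - β) = β - m * N by ring]
  split_ifs <;> simp <;> omega

lemma gS_eq {a : ℤ} (ha : 0 < a) {N β M T m : ℤ}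
    (h0 : 0 ≤ cdiv (m * N - β) a) (hM : cdiv (m * N - β + T) a ≤ M) :
    gS N a β M T m = hSet N a β T m := by
  apply Finset.Subset.antisymm (gS_subset ha N β M T m)
  intro n hn
  have hn' := hn
  rw [hSet, Finset.mem_Ico] at hn'
  simp only [gS, Finset.mem_filter, Finset.mem_Ico]
  exact ⟨⟨by omega, by omega⟩, (mem_hSet ha).mp hn⟩

lemma Fc_fiber {N a β M T : ℤ} (hN : 0 < N) (ha : 0 ≤ a) (hT : T ≤ N) :
    Fc N a β M T = ∑ m ∈ Finset.Ico (β / N) ((β + M * a) / N + 1),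
      (gS N a β M T m).card := by
  rw [Fc]
  rw [Finset.card_eq_sum_card_fiberwise
    (f := fun n => (β + n * a) / N)
    (t := Finset.Ico (β / N) ((β + M * a) / N + 1)) ?_]
  · apply Finset.sum_congr rfl
    intro m _
    congr 1
    ext n
    simp only [Finset.mem_filter, Finset.mem_Ico, gS]
    constructor
    · rintro ⟨⟨⟨hn0, hnM⟩, hmod⟩, rfl⟩
      have hde := Int.mul_ediv_add_emod (β + n * a) N
      have h0 := Int.emod_nonneg (β + n * a) (by omega : N ≠ 0)
      exact ⟨⟨hn0, hnM⟩, by linarith, by linarith⟩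
    · rintro ⟨⟨hn0, hnM⟩, h1, h2⟩
      have huniq := (Int.ediv_emod_unique (a := β + n * a) (b := N)
        (q := m) (r := β + n * a - m * N) hN).mpr ⟨by ring, by linarith, by linarith⟩
      exact ⟨⟨⟨hn0, hnM⟩, by rw [huniq.2]; linarith⟩, huniq.1⟩
  · intro n hn
    rw [Finset.mem_coe, Finset.mem_filter, Finset.mem_Ico] at hn
    obtain ⟨⟨hn0, hnM⟩, -⟩ := hn
    dsimp only
    rw [Finset.mem_coe, Finset.mem_Ico]
    refine ⟨Int.ediv_le_ediv hN (by nlinarith), ?_⟩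
    have h1 : β + n * a ≤ β + M * a := by nlinarith
    have h2 := Int.ediv_le_ediv hN h1
    omega


lemma cfVal_mem (l : List ℕ) (hl : ∀ c ∈ l, 1 ≤ c) : 0 ≤ cfVal l ∧ cfVal l ≤ 1 := by
  induction l with
  | nil => simp [cfVal]
  | cons c l ih =>
    have hc : 1 ≤ c := hl c (by simp)
    have ih' := ih (fun d hd => hl d (by simp [hd]))
    have hc1 : (1 : ℚ) ≤ (c : ℚ) := by exact_mod_cast hc
    have hpos : (0 : ℚ) < (c : ℚ) + cfVal l := by linarith [ih'.1]
    constructor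
    · simp only [cfVal]; positivity
    · simp only [cfVal]
      rw [div_le_one hpos]; linarith [ih'.1]

set_option maxHeartbeats 2000000 in
lemma main_bound (l : List ℕ) (hl : ∀ c ∈ l, 1 ≤ c) : ∀ N a : ℤ, 0 < N → 0 ≤ a →
    IsCoprime a N → cfVal l = (a : ℚ) / (N : ℚ) →
    ∀ β M T : ℤ, 0 ≤ M → 0 ≤ T → T ≤ N →
    |(Fc N a β M T : ℚ) - (M * T) / N| ≤ 10 * (l.sum + 1) := by
  induction l with
  | nil =>
    intro N a hN ha hcop hcf β M T hM hT hTN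
    simp only [cfVal] at hcf
    have haq : (a : ℚ) = 0 := by
      rcases div_eq_zero_iff.mp hcf.symm with h | h
      · exact h
      · exfalso; have : (N : ℚ) ≠ 0 := by exact_mod_cast (by omega : N ≠ 0)
        exact this h
    have ha0 : a = 0 := by exact_mod_cast haq
    subst ha0
    have hN1 : N = 1 := by
      have h := isCoprime_zero_left.mp hcop
      rcases Int.isUnit_iff.mp h with h1 | h1 <;> omega
    subst hN1
    have hT01 : T = 0 ∨ T = 1 := by omega
    rcases hT01 with rfl | rfl
    · simp [Fc]
    · have : Fc 1 0 β M 1 = M.toNat := by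
        simp [Fc, Int.emod_one]
      rw [this]
      rw [show ((M.toNat : ℚ)) = (M : ℚ) by exact_mod_cast Int.toNat_of_nonneg hM]
      simp
  | cons c l' ih =>
    intro N a hN ha hcop hcf β M T hM hT hTN
    have hc : 1 ≤ c := hl c (by simp)
    have hcQ : (1:ℚ) ≤ (c:ℚ) := by exact_mod_cast hc
    have hl' : ∀ d ∈ l', 1 ≤ d := fun d hd => hl d (by simp [hd])
    obtain ⟨hθ0, hθ1⟩ := cfVal_mem l' hl'
    have hNQ : (0:ℚ) < (N:ℚ) := by exact_mod_cast hN
    have hden : (0:ℚ) < (c:ℚ) + cfVal l' := by linarith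
    have hcf1 : 1 / ((c:ℚ) + cfVal l') = (a:ℚ)/(N:ℚ) := by
      simpa [cfVal] using hcf
    have haQ : (0:ℚ) < (a:ℚ) := by
      by_contra h
      push_neg at h
      have h1 : (0:ℚ) < 1 / ((c:ℚ) + cfVal l') := by positivity
      rw [hcf1] at h1
      have : (a:ℚ)/(N:ℚ) ≤ 0 := div_nonpos_of_nonpos_of_nonneg h hNQ.le
      linarith
    have ha0 : 0 < a := by exact_mod_cast haQ
    have hNa : (1:ℚ) * (N:ℚ) = (a:ℚ) * ((c:ℚ) + cfVal l') :=
      (div_eq_div_iff hden.ne' hNQ.ne').mp hcf1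
    have ha1Q : ((N - c*a : ℤ):ℚ) = (a:ℚ) * cfVal l' := by
      push_cast
      linarith
    have ha10 : 0 ≤ N - c*a := by
      have h : (0:ℚ) ≤ ((N - c*a : ℤ):ℚ) := by
        rw [ha1Q]; exact mul_nonneg haQ.le hθ0
      exact_mod_cast h
    have ha1a : N - c*a ≤ a := by
      have h : ((N - c*a : ℤ):ℚ) ≤ (a:ℚ) := by rw [ha1Q]; nlinarith
      exact_mod_cast h
    have hcfl' : cfVal l' = ((N - c*a : ℤ):ℚ)/(a:ℚ) := by
      rw [ha1Q]; field_simp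
    have hcop' : IsCoprime (N - c*a) a := by
      have h2 := hcop.symm.add_mul_left_left (-c)
      have : N + (a:ℤ) * (-(c:ℤ)) = N - c*a := by ring
      rwa [this] at h2
    have hqt : a * (T/a) + T % a = T := Int.mul_ediv_add_emod T a
    have ht0 : 0 ≤ T % a := Int.emod_nonneg _ (by omega)
    have hta : T % a < a := Int.emod_lt_of_pos _ ha0
    have hq0 : 0 ≤ T / a := Int.ediv_nonneg hT ha0.le
    have hm01 : β / N ≤ (β + M * a) / N + 1 := by
      have := Int.ediv_le_ediv hN (show β ≤ β + M*a by nlinarith)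
      omega
    have hL0 : 0 ≤ (β + M * a) / N + 1 - β / N := by omega
    -- fiberwise decomposition
    have hfib : Fc N a β M T
        = ∑ m ∈ Finset.Ico (β / N) ((β + M * a) / N + 1), (gS N a β M T m).card :=
      Fc_fiber hN ha hTN
    -- bounds on m*N - β for m in the range
    have hXlow : ∀ m ∈ Finset.Ico (β / N) ((β + M * a) / N + 1), -N < m * N - β := by
      intro m hmR
      rw [Finset.mem_Ico] at hmR
      have h1 := Int.mul_ediv_add_emod β N
      have h2 := Int.emod_lt_of_pos β hN
      have h3 : N * (β / N) ≤ N * m := mul_le_mul_of_nonneg_left hmR.1 (by omega)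
      linarith
    have hXhigh : ∀ m ∈ Finset.Ico (β / N) ((β + M * a) / N + 1), m * N - β ≤ M * a := by
      intro m hmR
      rw [Finset.mem_Ico] at hmR
      have h1 := Int.mul_ediv_add_emod (β + M*a) N
      have h2 := Int.emod_nonneg (β + M*a) (by omega : N ≠ 0)
      have h4 : m ≤ (β + M*a)/N := by omega
      have h3 : N * m ≤ N * ((β + M*a)/N) := mul_le_mul_of_nonneg_left h4 (by omega)
      linarith
    -- at most two "bad" m
    have hbm : ((Finset.Ico (β / N) ((β + M * a) / N + 1)).filter
        (fun m => cdiv (m * N - β) a < 0)).card ≤ 1 := by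
      rw [Finset.card_le_one]
      intro m hm m' hm'
      simp only [Finset.mem_filter] at hm hm'
      have h1 : m * N - β ≤ -a := by
        have h := (cdiv_le ha0 (X := m*N - β) (n := -1)).mp (by omega)
        linarith
      have h1' : m' * N - β ≤ -a := by
        have h := (cdiv_le ha0 (X := m'*N - β) (n := -1)).mp (by omega)
        linarith
      have h2 := hXlow m hm.1
      have h2' := hXlow m' hm'.1
      by_contra hne
      rcases lt_or_gt_of_ne hne with hlt | hlt
      · have hh : m + 1 ≤ m' := by omega
        have : N * (m+1) ≤ N * m' := mul_le_mul_of_nonneg_left hh (by omega)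
        linarith
      · have hh : m' + 1 ≤ m := by omega
        have : N * (m'+1) ≤ N * m := mul_le_mul_of_nonneg_left hh (by omega)
        linarith
    have hbp : ((Finset.Ico (β / N) ((β + M * a) / N + 1)).filter
        (fun m => M < cdiv (m * N - β + T) a)).card ≤ 1 := by
      rw [Finset.card_le_one]
      intro m hm m' hm'
      simp only [Finset.mem_filter] at hm hm'
      have h1 : M * a < m * N - β + T := by
        have h := (lt_cdiv ha0 (X := m*N - β + T) (n := M)).mp hm.2
        linarith
      have h1' : M * a < m' * N - β + T := by
        have h := (lt_cdiv ha0 (X := m'*N - β + T) (n := M)).mp hm'.2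
        linarith
      have h2 := hXhigh m hm.1
      have h2' := hXhigh m' hm'.1
      by_contra hne
      rcases lt_or_gt_of_ne hne with hlt | hlt
      · have hh : m + 1 ≤ m' := by omega
        have : N * (m+1) ≤ N * m' := mul_le_mul_of_nonneg_left hh (by omega)
        linarith
      · have hh : m' + 1 ≤ m := by omega
        have : N * (m'+1) ≤ N * m := mul_le_mul_of_nonneg_left hh (by omega)
        linarith
    have hcard_bad : ((Finset.Ico (β / N) ((β + M * a) / N + 1)).filter
        (fun m => cdiv (m * N - β) a < 0 ∨ M < cdiv (m * N - β + T) a)).card ≤ 2 := by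
      classical
      rw [Finset.filter_or]
      exact le_trans (Finset.card_union_le _ _) (by omega)
    -- sum of h-counts
    have hsum_h : ∑ m ∈ Finset.Ico (β / N) ((β + M * a) / N + 1),
        ((hSet N a β T m).card : ℤ)
        = ((β + M * a) / N + 1 - β / N) * (T / a)
          + ((Finset.Ico (β / N) ((β + M * a) / N + 1)).filter
              (fun m => (β - m * N) % a < T % a)).card := by
      rw [Finset.sum_congr rfl (fun m _ => hSet_card ha0 hT N β m)]
      rw [Finset.sum_add_distrib, Finset.sum_const, Finset.sum_boole]
      rw [Int.card_Ico, nsmul_eq_mul, Int.toNat_of_nonneg hL0]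
    -- difference sums
    have hDS0 : ∀ m ∈ Finset.Ico (β / N) ((β + M * a) / N + 1),
        (0:ℤ) ≤ ((hSet N a β T m).card : ℤ) - ((gS N a β M T m).card : ℤ) := by
      intro m _
      have := Finset.card_le_card (gS_subset ha0 N β M T m)
      omega
    have hDSle : ∀ m, ((hSet N a β T m).card : ℤ) - ((gS N a β M T m).card : ℤ)
        ≤ T/a + 1 := by
      intro m
      have h := hSet_card ha0 hT N β m
      have : ((hSet N a β T m).card : ℤ) ≤ T/a + 1 := by
        rw [h]; split_ifs <;> omega
      omega
    have hDsum : ∑ m ∈ Finset.Ico (β / N) ((β + M * a) / N + 1),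
        (((hSet N a β T m).card : ℤ) - ((gS N a β M T m).card : ℤ))
        ≤ 2 * (T/a + 1) := by
      classical
      rw [← Finset.sum_filter_of_ne
        (p := fun m => cdiv (m * N - β) a < 0 ∨ M < cdiv (m * N - β + T) a) ?_]
      · refine le_trans (Finset.sum_le_card_nsmul _ _ (T/a + 1)
          (fun m _ => hDSle m)) ?_
        rw [nsmul_eq_mul]
        have hb2 : (((Finset.Ico (β / N) ((β + M * a) / N + 1)).filter
            (fun m => cdiv (m * N - β) a < 0 ∨ M < cdiv (m * N - β + T) a)).card : ℤ)
            ≤ 2 := by exact_mod_cast hcard_bad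
        have : (0:ℤ) ≤ T/a + 1 := by omega
        nlinarith
      · intro m _ hne
        by_contra hnb
        push_neg at hnb
        apply hne
        rw [gS_eq ha0 hnb.1 hnb.2]
        ring
    -- value of Fc in terms of the smaller problem
    have hFval : (Fc N a β M T : ℤ)
        = ((β + M * a) / N + 1 - β / N) * (T / a)
          + ((Finset.Ico (β / N) ((β + M * a) / N + 1)).filter
              (fun m => (β - m * N) % a < T % a)).card
          - ∑ m ∈ Finset.Ico (β / N) ((β + M * a) / N + 1),
              (((hSet N a β T m).card : ℤ) - ((gS N a β M T m).card : ℤ)) := by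
      rw [Finset.sum_sub_distrib, hsum_h]
      have : (Fc N a β M T : ℤ)
          = ∑ m ∈ Finset.Ico (β / N) ((β + M * a) / N + 1), ((gS N a β M T m).card : ℤ) := by
        rw [hfib]; push_cast; ring
      rw [this]; ring
    -- reindex the filtered count as Fc of the smaller problem
    have hcnt2 : ((Finset.Ico (β / N) ((β + M * a) / N + 1)).filter
            (fun m => (β - m * N) % a < T % a)).card
        = Fc a (N - c*a) (β - ((β + M * a) / N) * (N - c*a))
            ((β + M * a) / N + 1 - β / N) (T % a) := by
      classical
      have hpred : (Finset.Ico (β / N) ((β + M * a) / N + 1)).filter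
            (fun m => (β - m * N) % a < T % a)
          = (Finset.Ico (β / N) ((β + M * a) / N + 1)).filter
            (fun m => (β - m * (N - c*a)) % a < T % a) := by
        apply Finset.filter_congr
        intro m _
        rw [show β - m*N = (β - m*(N - c*a)) + a * (-(m*c)) by ring,
          Int.add_mul_emod_self_left]
      rw [hpred, Fc]
      apply Finset.card_nbij' (i := fun m => (β + M * a) / N - m)
        (j := fun j => (β + M * a) / N - j)
      · intro m hm
        simp only [Finset.mem_coe, Finset.mem_filter, Finset.mem_Ico] at hm ⊢
        refine ⟨⟨by omega, by omega⟩, ?_⟩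
        rw [show β - ((β + M * a) / N) * (N - c*a) + ((β + M * a) / N - m) * (N - c*a)
            = β - m * (N - c*a) by ring]
        exact hm.2
      · intro j hj
        simp only [Finset.mem_coe, Finset.mem_filter, Finset.mem_Ico] at hj ⊢
        refine ⟨⟨by omega, by omega⟩, ?_⟩
        rw [show β - ((β + M * a) / N - j) * (N - c*a)
            = β - ((β + M * a) / N) * (N - c*a) + j * (N - c*a) by ring]
        exact hj.2
      · intro m _; dsimp only; omega
      · intro j _; dsimp only; omega
    -- induction hypothesis
    have hIH := ih hl' a (N - c*a) ha0 ha10 hcop' hcfl'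
      (β - ((β + M * a) / N) * (N - c*a)) ((β + M * a) / N + 1 - β / N) (T % a)
      hL0 ht0 hta.le
    -- rational assembly
    have haQ' : (a:ℚ) ≠ 0 := haQ.ne'
    have hqtQ : (a:ℚ) * ((T/a : ℤ):ℚ) + ((T % a : ℤ):ℚ) = (T:ℚ) := by exact_mod_cast hqt
    have hFQ : (Fc N a β M T : ℚ)
        = (((β + M * a) / N + 1 - β / N : ℤ):ℚ) * ((T/a : ℤ):ℚ)
          + (Fc a (N - c*a) (β - ((β + M * a) / N) * (N - c*a))
              ((β + M * a) / N + 1 - β / N) (T % a) : ℚ)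
          - ((∑ m ∈ Finset.Ico (β / N) ((β + M * a) / N + 1),
              (((hSet N a β T m).card : ℤ) - ((gS N a β M T m).card : ℤ)) : ℤ) : ℚ) := by
      rw [hcnt2] at hFval
      exact_mod_cast congrArg (fun z : ℤ => (z : ℚ)) hFval
    -- |L - M*a/N| ≤ 2
    have hZ : N * ((β + M * a) / N + 1 - β / N)
        = M * a + (β % N - (β + M*a) % N) + N := by
      have h1 := Int.mul_ediv_add_emod β N
      have h2 := Int.mul_ediv_add_emod (β + M*a) N
      ring_nf
      ring_nf at h1 h2
      linarith
    have hZQ : (N:ℚ) * (((β + M * a) / N + 1 - β / N : ℤ):ℚ)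
        = (M:ℚ) * a + (((β % N : ℤ):ℚ) - ((((β + M*a) % N : ℤ)):ℚ)) + N := by
      exact_mod_cast hZ
    have he0 : (0:ℚ) ≤ ((β % N : ℤ):ℚ) := by
      exact_mod_cast Int.emod_nonneg β (by omega : N ≠ 0)
    have he0' : ((β % N : ℤ):ℚ) < (N:ℚ) := by
      exact_mod_cast Int.emod_lt_of_pos β hN
    have he1 : (0:ℚ) ≤ (((β + M*a) % N : ℤ):ℚ) := by
      exact_mod_cast Int.emod_nonneg (β + M*a) (by omega : N ≠ 0)
    have he1' : (((β + M*a) % N : ℤ):ℚ) < (N:ℚ) := by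
      exact_mod_cast Int.emod_lt_of_pos (β + M*a) hN
    have hLQ : |(((β + M * a) / N + 1 - β / N : ℤ):ℚ) - (M:ℚ) * a / N| ≤ 2 := by
      have h : (((β + M * a) / N + 1 - β / N : ℤ):ℚ) - (M:ℚ) * a / N
          = (((β % N : ℤ):ℚ) - ((((β + M*a) % N : ℤ)):ℚ) + N) / N := by
        have hZQ' := hZQ
        push_cast at hZQ'
        field_simp
        push_cast
        linarith [hZQ']
      rw [h, abs_div, abs_of_pos hNQ, div_le_iff₀ hNQ]
      rw [abs_le]
      constructor <;> linarith
    have hTaQ : (T:ℚ)/(a:ℚ) ≤ (c:ℚ) + 1 := by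
      rw [div_le_iff₀ haQ]
      have hNle : (N:ℚ) ≤ (a:ℚ) * ((c:ℚ) + 1) := by
        have hmul : (a:ℚ) * cfVal l' ≤ (a:ℚ) * 1 := mul_le_mul_of_nonneg_left hθ1 haQ.le
        linarith [hNa, hmul]
      have hTQ : (T:ℚ) ≤ (N:ℚ) := by exact_mod_cast hTN
      linarith
    have hqQ : ((T/a : ℤ):ℚ) ≤ (T:ℚ)/(a:ℚ) := by
      rw [le_div_iff₀ haQ]
      have ht0Q : (0:ℚ) ≤ ((T % a : ℤ):ℚ) := by exact_mod_cast ht0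
      linarith
    have hq0Q : (0:ℚ) ≤ ((T/a : ℤ):ℚ) := by exact_mod_cast hq0
    have hDS0Q : (0:ℚ) ≤ ((∑ m ∈ Finset.Ico (β / N) ((β + M * a) / N + 1),
        (((hSet N a β T m).card : ℤ) - ((gS N a β M T m).card : ℤ)) : ℤ) : ℚ) := by
      exact_mod_cast Finset.sum_nonneg hDS0
    have hDS2Q : ((∑ m ∈ Finset.Ico (β / N) ((β + M * a) / N + 1),
        (((hSet N a β T m).card : ℤ) - ((gS N a β M T m).card : ℤ)) : ℤ) : ℚ)
        ≤ 2 * (((T/a : ℤ):ℚ) + 1) := by exact_mod_cast hDsum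
    have hT0Q : (0:ℚ) ≤ (T:ℚ) := by exact_mod_cast hT
    -- split identity
    have e1 : (((β + M * a) / N + 1 - β / N : ℤ):ℚ) * ((T/a : ℤ):ℚ)
        = ((T:ℚ)/a) * (((β + M * a) / N + 1 - β / N : ℤ):ℚ)
          - (((β + M * a) / N + 1 - β / N : ℤ):ℚ) * ((T % a : ℤ):ℚ) / a := by
      rw [← hqtQ]
      field_simp
      ring
    have e2 : (M:ℚ) * (T:ℚ) / N = ((T:ℚ)/a) * ((M:ℚ) * a / N) := by
      field_simp
    have hsplit : (Fc N a β M T : ℚ) - (M:ℚ) * T / N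
        = ((Fc a (N - c*a) (β - ((β + M * a) / N) * (N - c*a))
              ((β + M * a) / N + 1 - β / N) (T % a) : ℚ)
            - (((β + M * a) / N + 1 - β / N : ℤ):ℚ) * ((T % a : ℤ):ℚ) / a)
          + ((T:ℚ)/a) * ((((β + M * a) / N + 1 - β / N : ℤ):ℚ) - (M:ℚ) * a / N)
          - ((∑ m ∈ Finset.Ico (β / N) ((β + M * a) / N + 1),
              (((hSet N a β T m).card : ℤ) - ((gS N a β M T m).card : ℤ)) : ℤ) : ℚ) := by
      rw [hFQ]
      linear_combination e1 - e2
    have habs1 := hIH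
    have hIH' : |(Fc a (N - c*a) (β - ((β + M * a) / N) * (N - c*a))
              ((β + M * a) / N + 1 - β / N) (T % a) : ℚ)
            - (((β + M * a) / N + 1 - β / N : ℤ):ℚ) * ((T % a : ℤ):ℚ) / a|
        ≤ 10 * ((l'.sum : ℚ) + 1) := by
      exact habs1
    have hmid : |((T:ℚ)/a) * ((((β + M * a) / N + 1 - β / N : ℤ):ℚ) - (M:ℚ) * a / N)|
        ≤ ((c:ℚ) + 1) * 2 := by
      rw [abs_mul, abs_of_nonneg (by positivity : (0:ℚ) ≤ (T:ℚ)/a)]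
      apply mul_le_mul hTaQ hLQ (abs_nonneg _) (by linarith)
    have hsum_cast : ((c :: l').sum : ℚ) = (c:ℚ) + (l'.sum : ℚ) := by
      push_cast [List.sum_cons]
      ring
    rw [hsplit, hsum_cast]
    have htri : ∀ x y z : ℚ, |x + y - z| ≤ |x| + |y| + |z| := by
      intro x y z
      calc |x + y - z| ≤ |x + y| + |z| := abs_sub _ _
        _ ≤ |x| + |y| + |z| := by linarith [abs_add_le x y]
    refine le_trans (htri _ _ _) ?_
    have hDabs : |((∑ m ∈ Finset.Ico (β / N) ((β + M * a) / N + 1),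
        (((hSet N a β T m).card : ℤ) - ((gS N a β M T m).card : ℤ)) : ℤ) : ℚ)|
        ≤ 2 * (((T/a : ℤ):ℚ) + 1) := by
      rw [abs_of_nonneg hDS0Q]; exact hDS2Q
    have hqc : ((T/a : ℤ):ℚ) ≤ (c:ℚ) + 1 := le_trans hqQ hTaQ
    linarith [hIH', hmid, hDabs]

lemma main_bound_real (l : List ℕ) (hl : ∀ c ∈ l, 1 ≤ c) (N a : ℤ) (hN : 0 < N)
    (ha : 0 ≤ a) (hcop : IsCoprime a N) (hcf : cfVal l = (a : ℚ) / (N : ℚ))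
    (β M T : ℤ) (hM : 0 ≤ M) (hT : 0 ≤ T) (hTN : T ≤ N) :
    |(Fc N a β M T : ℝ) - (M * T) / N| ≤ 10 * (l.sum + 1) := by
  have h := main_bound l hl N a hN ha hcop hcf β M T hM hT hTN
  have h2 := (Rat.cast_le (K := ℝ)).mpr h
  rw [Rat.cast_abs] at h2
  refine le_trans (le_of_eq ?_) (le_trans h2 (le_of_eq ?_)) <;> norm_cast

lemma Fc_shift (N a K1 L1 T : ℤ) :
    Fc N a (K1*a) (L1 - K1) T
      = ((Finset.Ico K1 L1).filter (fun n => (n*a) % N < T)).card := by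
  rw [Fc]
  apply Finset.card_nbij' (i := fun j => K1 + j) (j := fun n => n - K1)
  · intro j hj
    simp only [Finset.mem_coe, Finset.mem_filter, Finset.mem_Ico] at hj ⊢
    refine ⟨⟨by omega, by omega⟩, ?_⟩
    rw [show (K1 + j) * a = K1*a + j*a by ring]
    exact hj.2
  · intro n hn
    simp only [Finset.mem_coe, Finset.mem_filter, Finset.mem_Ico] at hn ⊢
    refine ⟨⟨by omega, by omega⟩, ?_⟩
    rw [show K1*a + (n - K1)*a = n*a by ring]
    exact hn.2
  · intro j _; dsimp only; omega
  · intro n _; dsimp only; omega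

lemma window_card (N a K1 L1 K2 L2 : ℤ) (hK2 : K2 ≤ L2) :
    ((Finset.Ico K1 L1).filter (fun n => (n*a) % N < L2)).card
      = ((Finset.Ico K1 L1).filter (fun n => (n*a) % N < K2)).card
        + ((Finset.Ico K1 L1).filter
            (fun n => K2 ≤ (n*a) % N ∧ (n*a) % N < L2)).card := by
  classical
  have hcongr : (Finset.Ico K1 L1).filter (fun n => (n*a) % N < L2)
      = (Finset.Ico K1 L1).filter
          (fun n => (n*a) % N < K2 ∨ (K2 ≤ (n*a) % N ∧ (n*a) % N < L2)) := by
    apply Finset.filter_congr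
    intro n _
    constructor
    · intro h; by_cases hk : (n*a) % N < K2
      · exact Or.inl hk
      · exact Or.inr ⟨not_lt.mp hk, h⟩
    · rintro (h | ⟨_, h⟩) <;> omega
  rw [hcongr, Finset.filter_or, Finset.card_union_of_disjoint]
  rw [Finset.disjoint_filter]
  intro n _ h1 h2
  omega

set_option maxHeartbeats 2000000 in
lemma box_bound (N a : ℕ) (hN : 2 ≤ N) (hcop : Nat.Coprime a N)
    (l : List ℕ) (hl1 : ∀ c ∈ l, 1 ≤ c) (hl2 : cfVal l = (a : ℚ) / (N : ℚ))
    (u v : Fin 2 → ℝ) (huv : ∀ i, 0 ≤ u i ∧ u i ≤ v i ∧ v i ≤ 1) :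
    |(Nat.card {n : ℕ // n < N ∧ ∀ i, u i ≤
          (![Int.fract ((n : ℝ) / N), Int.fract ((n : ℝ) * a / N)]) i ∧
          (![Int.fract ((n : ℝ) / N), Int.fract ((n : ℝ) * a / N)]) i < v i} : ℝ) / N
        - ∏ i, (v i - u i)| ≤ (20 * (l.sum : ℝ) + 24) / N := by
  classical
  have hN0 : (0:ℝ) < N := by positivity
  have hNZ : 0 < (N:ℤ) := by exact_mod_cast (by omega : 0 < N)
  set K1 : ℤ := ⌈u 0 * N⌉ with hK1
  set L1 : ℤ := ⌈v 0 * N⌉ with hL1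
  set K2 : ℤ := ⌈u 1 * N⌉ with hK2
  set L2 : ℤ := ⌈v 1 * N⌉ with hL2
  have hK10 : 0 ≤ K1 := Int.ceil_nonneg (mul_nonneg (huv 0).1 hN0.le)
  have hK20 : 0 ≤ K2 := Int.ceil_nonneg (mul_nonneg (huv 1).1 hN0.le)
  have hK1L1 : K1 ≤ L1 :=
    Int.ceil_le_ceil (mul_le_mul_of_nonneg_right (huv 0).2.1 hN0.le)
  have hK2L2 : K2 ≤ L2 :=
    Int.ceil_le_ceil (mul_le_mul_of_nonneg_right (huv 1).2.1 hN0.le)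
  have hL1N : L1 ≤ N := by
    rw [hL1, Int.ceil_le]
    push_cast
    nlinarith [(huv 0).2.2]
  have hL2N : L2 ≤ N := by
    rw [hL2, Int.ceil_le]
    push_cast
    nlinarith [(huv 1).2.2]
  -- pointwise characterization
  have hmem : ∀ n : ℕ, n < N →
      ((∀ i, u i ≤ (![Int.fract ((n : ℝ) / N), Int.fract ((n : ℝ) * a / N)]) i ∧
          (![Int.fract ((n : ℝ) / N), Int.fract ((n : ℝ) * a / N)]) i < v i)
      ↔ (K1 ≤ (n:ℤ) ∧ (n:ℤ) < L1 ∧ K2 ≤ ((n:ℤ) * a) % (N:ℤ)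
          ∧ ((n:ℤ) * a) % (N:ℤ) < L2)) := by
    intro n hn
    have hz0 : Int.fract ((n:ℝ)/N) = (n:ℝ)/N :=
      Int.fract_eq_self.mpr ⟨by positivity, by
        rw [div_lt_one hN0]; exact_mod_cast hn⟩
    have hmodlt : n * a % N < N := Nat.mod_lt _ (by omega)
    have hz1 : Int.fract ((n:ℝ) * a / N) = ((n * a % N : ℕ) : ℝ) / N := by
      have h1 : ((n*a : ℕ):ℝ) = (N:ℝ) * ((n*a/N : ℕ):ℝ) + ((n*a % N : ℕ):ℝ) := by
        exact_mod_cast (Nat.div_add_mod (n*a) N).symm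
      have h2 : (n:ℝ) * a / N = (((n*a/N : ℕ) : ℤ):ℝ) + ((n*a % N : ℕ):ℝ)/N := by
        rw [show (n:ℝ)*a = ((n*a : ℕ):ℝ) by push_cast; ring, h1]
        push_cast
        field_simp
        norm_cast
        exact Nat.cast_add _ _
      rw [h2, Int.fract_intCast_add, Int.fract_eq_self.mpr ⟨by positivity, by
        rw [div_lt_one hN0]; exact_mod_cast hmodlt⟩]
    have hcast : ((n * a % N : ℕ) : ℤ) = ((n:ℤ) * a) % (N:ℤ) := by push_cast; ring_nf
    have i1 : u 0 ≤ (n:ℝ)/N ↔ K1 ≤ (n:ℤ) := by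
      rw [hK1, Int.ceil_le]
      push_cast
      exact le_div_iff₀ hN0
    have i2 : (n:ℝ)/N < v 0 ↔ (n:ℤ) < L1 := by
      rw [hL1, Int.lt_ceil]
      push_cast
      exact div_lt_iff₀ hN0
    have i3 : u 1 ≤ ((n * a % N : ℕ) : ℝ)/N ↔ K2 ≤ ((n * a % N : ℕ) : ℤ) := by
      rw [hK2, Int.ceil_le]
      push_cast
      exact le_div_iff₀ hN0
    have i4 : ((n * a % N : ℕ) : ℝ)/N < v 1 ↔ ((n * a % N : ℕ) : ℤ) < L2 := by
      rw [hL2, Int.lt_ceil]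
      push_cast
      exact div_lt_iff₀ hN0
    rw [hcast] at i3 i4
    rw [Fin.forall_fin_two]
    simp only [Matrix.cons_val_zero, Matrix.cons_val_one, Matrix.head_cons, hz0, hz1]
    constructor
    · rintro ⟨⟨h00, h01⟩, h10, h11⟩
      exact ⟨i1.mp h00, i2.mp h01, i3.mp h10, i4.mp h11⟩
    · rintro ⟨h1, h2, h3, h4⟩
      exact ⟨⟨i1.mpr h1, i2.mpr h2⟩, ⟨i3.mpr h3, i4.mpr h4⟩⟩
  -- counting
  have hcard1 : Nat.card {n : ℕ // n < N ∧ ∀ i, u i ≤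
          (![Int.fract ((n : ℝ) / N), Int.fract ((n : ℝ) * a / N)]) i ∧
          (![Int.fract ((n : ℝ) / N), Int.fract ((n : ℝ) * a / N)]) i < v i}
      = ((Finset.range N).filter (fun n : ℕ => ∀ i, u i ≤
          (![Int.fract ((n : ℝ) / N), Int.fract ((n : ℝ) * a / N)]) i ∧
          (![Int.fract ((n : ℝ) / N), Int.fract ((n : ℝ) * a / N)]) i < v i)).card := by
    rw [← Nat.card_eq_finsetCard]
    apply Nat.card_congr
    apply (Equiv.subtypeEquivRight ?_)
    intro n
    simp [Finset.mem_filter, Finset.mem_range]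
  have hcard2 : ((Finset.range N).filter (fun n : ℕ => ∀ i, u i ≤
          (![Int.fract ((n : ℝ) / N), Int.fract ((n : ℝ) * a / N)]) i ∧
          (![Int.fract ((n : ℝ) / N), Int.fract ((n : ℝ) * a / N)]) i < v i)).card
      = ((Finset.Ico K1 L1).filter
          (fun m => K2 ≤ (m * a) % (N:ℤ) ∧ (m * a) % (N:ℤ) < L2)).card := by
    refine Finset.card_nbij' (fun n => (n : ℤ)) (fun m => m.toNat) ?_ ?_ ?_ ?_
    · intro n hn
      simp only [Finset.mem_coe, Finset.mem_filter, Finset.mem_range] at hn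
      have h := (hmem n hn.1).mp hn.2
      simp only [Finset.mem_coe, Finset.mem_filter, Finset.mem_Ico]
      exact ⟨⟨h.1, h.2.1⟩, h.2.2.1, h.2.2.2⟩
    · intro m hm
      simp only [Finset.mem_coe, Finset.mem_filter, Finset.mem_Ico] at hm
      obtain ⟨⟨hm1, hm2⟩, hm3, hm4⟩ := hm
      have hm0 : 0 ≤ m := le_trans hK10 hm1
      have hmN : m.toNat < N := by omega
      simp only [Finset.mem_coe, Finset.mem_filter, Finset.mem_range]
      refine ⟨hmN, (hmem m.toNat hmN).mpr ?_⟩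
      rw [Int.toNat_of_nonneg hm0]
      exact ⟨hm1, hm2, hm3, hm4⟩
    · intro n _
      exact Int.toNat_natCast n
    · intro m hm
      simp only [Finset.mem_coe, Finset.mem_filter, Finset.mem_Ico] at hm
      have : 0 ≤ m := le_trans hK10 hm.1.1
      exact Int.toNat_of_nonneg this
  have hcount : ((Finset.Ico K1 L1).filter
          (fun m => K2 ≤ (m * a) % (N:ℤ) ∧ (m * a) % (N:ℤ) < L2)).card
        + Fc (N:ℤ) (a:ℤ) (K1 * a) (L1 - K1) K2
      = Fc (N:ℤ) (a:ℤ) (K1 * a) (L1 - K1) L2 := by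
    rw [Fc_shift, Fc_shift, window_card (N:ℤ) (a:ℤ) K1 L1 K2 L2 hK2L2]
    omega
  -- main bound applications
  have hcopZ : IsCoprime (a : ℤ) (N : ℤ) := Nat.isCoprime_iff_coprime.mpr hcop
  have hcfZ : cfVal l = ((a:ℤ) : ℚ) / ((N:ℤ) : ℚ) := by push_cast; exact hl2
  have hb1 := main_bound_real l hl1 (N:ℤ) (a:ℤ) hNZ (by positivity) hcopZ hcfZ
    (K1 * a) (L1 - K1) L2 (by omega) (by omega) hL2N
  have hb2 := main_bound_real l hl1 (N:ℤ) (a:ℤ) hNZ (by positivity) hcopZ hcfZ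
    (K1 * a) (L1 - K1) K2 (by omega) hK20 (le_trans hK2L2 hL2N)
  -- real count value
  have hcountR : (Nat.card {n : ℕ // n < N ∧ ∀ i, u i ≤
          (![Int.fract ((n : ℝ) / N), Int.fract ((n : ℝ) * a / N)]) i ∧
          (![Int.fract ((n : ℝ) / N), Int.fract ((n : ℝ) * a / N)]) i < v i} : ℝ)
      = (Fc (N:ℤ) (a:ℤ) (K1 * a) (L1 - K1) L2 : ℝ)
        - (Fc (N:ℤ) (a:ℤ) (K1 * a) (L1 - K1) K2 : ℝ) := by
    rw [hcard1, hcard2]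
    have h := congrArg (fun k : ℕ => (k : ℝ)) hcount
    push_cast at h
    linarith
  -- ceiling approximation bounds
  have hx : |((L1 : ℝ) - (K1 : ℝ)) - (v 0 - u 0) * N| ≤ 2 := by
    have b1 : u 0 * N ≤ (K1:ℝ) := by rw [hK1]; exact Int.le_ceil _
    have b2 : (K1:ℝ) < u 0 * N + 1 := by rw [hK1]; exact Int.ceil_lt_add_one _
    have b3 : v 0 * N ≤ (L1:ℝ) := by rw [hL1]; exact Int.le_ceil _
    have b4 : (L1:ℝ) < v 0 * N + 1 := by rw [hL1]; exact Int.ceil_lt_add_one _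
    rw [abs_le]
    constructor <;> nlinarith
  have hy : |((L2 : ℝ) - (K2 : ℝ)) - (v 1 - u 1) * N| ≤ 2 := by
    have b1 : u 1 * N ≤ (K2:ℝ) := by rw [hK2]; exact Int.le_ceil _
    have b2 : (K2:ℝ) < u 1 * N + 1 := by rw [hK2]; exact Int.ceil_lt_add_one _
    have b3 : v 1 * N ≤ (L2:ℝ) := by rw [hL2]; exact Int.le_ceil _
    have b4 : (L2:ℝ) < v 1 * N + 1 := by rw [hL2]; exact Int.ceil_lt_add_one _
    rw [abs_le]
    constructor <;> nlinarith
  have hy0 : (0:ℝ) ≤ (L2:ℝ) - (K2:ℝ) := by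
    have h : (K2:ℝ) ≤ (L2:ℝ) := by exact_mod_cast hK2L2
    linarith
  have hyN : (L2:ℝ) - (K2:ℝ) ≤ N := by
    have h1 : (L2:ℝ) ≤ N := by exact_mod_cast hL2N
    have h2 : (0:ℝ) ≤ (K2:ℝ) := by exact_mod_cast hK20
    linarith
  have hx0 : (0:ℝ) ≤ v 0 - u 0 := by linarith [(huv 0).2.1]
  have hx1 : v 0 - u 0 ≤ 1 := by linarith [(huv 0).1, (huv 0).2.2]
  -- area comparison
  have harea : |((L1:ℝ) - K1) * ((L2:ℝ) - K2) / (N * N) - (v 0 - u 0) * (v 1 - u 1)|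
      ≤ 4 / N := by
    have hid : ((L1:ℝ) - K1) * ((L2:ℝ) - K2) / (N * N) - (v 0 - u 0) * (v 1 - u 1)
        = (((L1:ℝ) - K1) - (v 0 - u 0) * N) * (((L2:ℝ) - K2)) / (N * N)
          + (v 0 - u 0) * (((L2:ℝ) - K2) - (v 1 - u 1) * N) / N := by
      field_simp
      ring
    rw [hid]
    have t1 : |(((L1:ℝ) - K1) - (v 0 - u 0) * N) * (((L2:ℝ) - K2)) / (N * N)| ≤ 2 / N := by
      rw [abs_div, abs_of_pos (by positivity : (0:ℝ) < (N:ℝ) * N), abs_mul]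
      rw [div_le_div_iff₀ (by positivity) hN0]
      have h1 : |(L2:ℝ) - K2| ≤ N := by rw [abs_of_nonneg hy0]; exact hyN
      have hAB : |(L1:ℝ) - K1 - (v 0 - u 0) * N| * |(L2:ℝ) - K2| ≤ 2 * N :=
        mul_le_mul hx h1 (abs_nonneg _) (by norm_num)
      have h3 := mul_le_mul_of_nonneg_right hAB hN0.le
      linarith
    have t2 : |(v 0 - u 0) * (((L2:ℝ) - K2) - (v 1 - u 1) * N) / N| ≤ 2 / N := by
      rw [abs_div, abs_of_pos hN0, abs_mul]
      rw [div_le_div_iff₀ hN0 hN0]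
      have h1 : |v 0 - u 0| ≤ 1 := by rw [abs_of_nonneg hx0]; exact hx1
      have hAB : |v 0 - u 0| * |(L2:ℝ) - K2 - (v 1 - u 1) * N| ≤ 1 * 2 :=
        mul_le_mul h1 hy (abs_nonneg _) (by norm_num)
      have h3 := mul_le_mul_of_nonneg_right hAB hN0.le
      linarith
    calc |(((L1:ℝ) - K1) - (v 0 - u 0) * N) * (((L2:ℝ) - K2)) / (N * N)
          + (v 0 - u 0) * (((L2:ℝ) - K2) - (v 1 - u 1) * N) / N|
        ≤ |(((L1:ℝ) - K1) - (v 0 - u 0) * N) * (((L2:ℝ) - K2)) / (N * N)|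
          + |(v 0 - u 0) * (((L2:ℝ) - K2) - (v 1 - u 1) * N) / N| := abs_add_le _ _
      _ ≤ 2/N + 2/N := add_le_add t1 t2
      _ = 4 / N := by ring
  -- final assembly
  rw [Fin.prod_univ_two, hcountR]
  have hid2 : ((Fc (N:ℤ) (a:ℤ) (K1 * a) (L1 - K1) L2 : ℝ)
        - (Fc (N:ℤ) (a:ℤ) (K1 * a) (L1 - K1) K2 : ℝ)) / N - (v 0 - u 0) * (v 1 - u 1)
      = ((Fc (N:ℤ) (a:ℤ) (K1 * a) (L1 - K1) L2 : ℝ)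
          - ((L1 - K1 : ℤ):ℝ) * ((L2:ℤ):ℝ) / N) / N
        - ((Fc (N:ℤ) (a:ℤ) (K1 * a) (L1 - K1) K2 : ℝ)
          - ((L1 - K1 : ℤ):ℝ) * ((K2:ℤ):ℝ) / N) / N
        + (((L1:ℝ) - K1) * ((L2:ℝ) - K2) / (N * N) - (v 0 - u 0) * (v 1 - u 1)) := by
    push_cast
    field_simp
    ring
  rw [hid2]
  have htri : ∀ x y z : ℝ, |x - y + z| ≤ |x| + |y| + |z| := by
    intro x y z
    have h1 : |x - y| ≤ |x| + |y| := by
      rw [sub_eq_add_neg]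
      exact (abs_add_le _ _).trans (by rw [abs_neg])
    calc |x - y + z| ≤ |x - y| + |z| := abs_add_le _ _
      _ ≤ |x| + |y| + |z| := by linarith
  have hb1' : |((Fc (N:ℤ) (a:ℤ) (K1 * a) (L1 - K1) L2 : ℝ)
      - ((L1 - K1 : ℤ):ℝ) * ((L2:ℤ):ℝ) / N)| ≤ 10 * ((l.sum : ℝ) + 1) := by
    convert hb1 using 3
    norm_cast
  have hb2' : |((Fc (N:ℤ) (a:ℤ) (K1 * a) (L1 - K1) K2 : ℝ)
      - ((L1 - K1 : ℤ):ℝ) * ((K2:ℤ):ℝ) / N)| ≤ 10 * ((l.sum : ℝ) + 1) := by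
    convert hb2 using 3
    norm_cast
  refine le_trans (htri _ _ _) ?_
  have d1 : |((Fc (N:ℤ) (a:ℤ) (K1 * a) (L1 - K1) L2 : ℝ)
      - ((L1 - K1 : ℤ):ℝ) * ((L2:ℤ):ℝ) / N) / N| ≤ 10 * ((l.sum : ℝ) + 1) / N := by
    rw [abs_div, abs_of_pos hN0]
    exact (div_le_div_iff_of_pos_right hN0).mpr hb1'
  have d2 : |((Fc (N:ℤ) (a:ℤ) (K1 * a) (L1 - K1) K2 : ℝ)
      - ((L1 - K1 : ℤ):ℝ) * ((K2:ℤ):ℝ) / N) / N| ≤ 10 * ((l.sum : ℝ) + 1) / N := by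
    rw [abs_div, abs_of_pos hN0]
    exact (div_le_div_iff_of_pos_right hN0).mpr hb2'
  have hfin : 10 * ((l.sum : ℝ) + 1) / N + 10 * ((l.sum : ℝ) + 1) / N + 4 / N
      = (20 * (l.sum : ℝ) + 24) / N := by
    field_simp
    ring
  have harea' : |(((L1:ℝ) - K1) * ((L2:ℝ) - K2) / (N * N) - (v 0 - u 0) * (v 1 - u 1))|
      ≤ 4 / N := harea
  linarith [d1, d2, harea']


theorem stmt17 (B : ℝ)
    (hMoser : ∀ N : ℕ, 2 ≤ N → ∃ a : ℕ, 1 ≤ a ∧ a < N ∧ Nat.Coprime a N ∧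
      ∃ l : List ℕ, (∀ c ∈ l, 1 ≤ c) ∧ cfVal l = (a : ℚ) / N ∧
        (l.sum : ℝ) ≤ B * Real.log N) :
    ∃ C > 0, ∀ N : ℕ, 2 ≤ N → ∃ a : ℕ, 1 ≤ a ∧ a < N ∧ Nat.Coprime a N ∧
      disc (fun n => ![Int.fract ((n : ℝ) / N), Int.fract ((n : ℝ) * a / N)]) N
        ≤ C * Real.log N / N := by
  have hlog2pos : (0:ℝ) < Real.log 2 := by
    have := Real.log_two_gt_d9
    linarith
  have hBlog : (1:ℝ) ≤ B * Real.log 2 := by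
    obtain ⟨a₂, ha₂1, ha₂2, -, l₂, hl₂1, hl₂2, hl₂3⟩ := hMoser 2 le_rfl
    have hsum : 1 ≤ l₂.sum := by
      rcases l₂ with - | ⟨c, rest⟩
      · exfalso
        have ha₂ : a₂ = 1 := by omega
        subst ha₂
        norm_num [cfVal] at hl₂2
      · have hc := hl₂1 c (by simp)
        simp only [List.sum_cons]
        omega
    have h1 : (1:ℝ) ≤ (l₂.sum : ℝ) := by exact_mod_cast hsum
    have h2 : ((2:ℕ):ℝ) = (2:ℝ) := by norm_num
    rw [h2] at hl₂3
    linarith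
  have hB0 : 0 < B := by nlinarith
  refine ⟨20*B + 35, by linarith, ?_⟩
  intro N hN
  obtain ⟨a, ha1, ha2, hacop, l, hl1, hl2, hl3⟩ := hMoser N hN
  refine ⟨a, ha1, ha2, hacop, ?_⟩
  have hN0 : (0:ℝ) < N := by exact_mod_cast (by omega : 0 < N)
  have hlogN : Real.log 2 ≤ Real.log N := by
    apply Real.log_le_log (by norm_num)
    exact_mod_cast hN
  have hlogN0 : 0 < Real.log N := lt_of_lt_of_le hlog2pos hlogN
  have hfinal : (20*(l.sum:ℝ) + 24)/N ≤ (20*B + 35) * Real.log N / N := by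
    rw [div_le_div_iff₀ hN0 hN0]
    have h24 : (24:ℝ) ≤ 35 * Real.log N := by nlinarith [Real.log_two_gt_d9]
    nlinarith [hl3, hN0]
  rw [disc]
  apply Real.sSup_le
  · rintro x ⟨u, v, huv, rfl⟩
    refine le_trans ?_ hfinal
    exact box_bound N a hN hacop l hl1 hl2 u v huv
  · positivity
end
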